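/- arXiv:1810.03448 — 2 statements merged into one kernel-verified Lean document; each statement's English description precedes it below -/
import Mathlib

section
/- Let E be a complex vector space of dimension d with basis e_1,…,e_d, regarded as the natural representation of GL_d(ℂ), and let λ be a partition. Then the formal character of the GL_d(ℂ)-representation ∇^λ(E) ⊆ Sym^λ E equals the Schur polynomial s_λ(x_1,…,x_d). -/
open scoped Classical

namespace Pleth

/-- A finitely supported function `f : ℕ → ℕ` is a partition when its values are weakly
decreasing.  Parts are indexed from `0`, so `f i` is the `(i+1)`-st part `λ_{i+1}`;
parts beyond the length of the partition are `0`. -/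
def IsPartition (f : ℕ →₀ ℕ) : Prop := ∀ i j : ℕ, i ≤ j → f j ≤ f i

/-- `f` is a partition of `n`. -/
def IsPartitionOf (f : ℕ →₀ ℕ) (n : ℕ) : Prop := IsPartition f ∧ f.sum (fun _ k => k) = n

/-- The multiset of (nonzero) parts of `f`. -/
def partsOf (f : ℕ →₀ ℕ) : Multiset ℕ := f.support.val.map f

/-- The rectangular partition `(v^r)` with `r` parts equal to `v`. -/
noncomputable def rect (r v : ℕ) : ℕ →₀ ℕ := (Finset.range r).sum fun i => Finsupp.single i v

/-- The dominance order on compositions:  `Dominates α β` means `α ⊵ β`. -/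
def Dominates (α β : ℕ →₀ ℕ) : Prop :=
  ∀ k : ℕ, ∑ i ∈ Finset.range k, β i ≤ ∑ i ∈ Finset.range k, α i

/-- The Young diagram of a (finitely supported) shape, with rows and columns indexed
from `0`: the cell `(i, j)` lies in row `i` and column `j`. -/
def cells (lam : ℕ →₀ ℕ) : Finset (ℕ × ℕ) :=
  (lam.support ×ˢ Finset.range (lam.support.sup lam)).filter fun p => p.2 < lam p.1

lemma mem_cells {lam : ℕ →₀ ℕ} {p : ℕ × ℕ} : p ∈ cells lam ↔ p.2 < lam p.1 := by
  constructor
  · exact fun h => (Finset.mem_filter.mp h).2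
  · intro h
    exact Finset.mem_filter.mpr ⟨Finset.mem_product.mpr
      ⟨Finsupp.mem_support_iff.mpr (by omega),
       Finset.mem_range.mpr (lt_of_lt_of_le h (Finset.le_sup (Finsupp.mem_support_iff.mpr (by omega))))⟩, h⟩

/-- The type of cells of the Young diagram of `lam`. -/
abbrev Cell (lam : ℕ →₀ ℕ) : Type := {p : ℕ × ℕ // p ∈ cells lam}

/-- A `lam`-tableau with entries in `B` is a function from the Young diagram of `lam` to `B`. -/
abbrev Tab (lam : ℕ →₀ ℕ) (B : Type*) : Type _ := Cell lam → B

/-- The rows of `t` are weakly increasing with respect to the relation `le`. -/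
def RowsWeak (lam : ℕ →₀ ℕ) {B : Type*} (le : B → B → Prop) (t : Tab lam B) : Prop :=
  ∀ p q : Cell lam, p.1.1 = q.1.1 → p.1.2 ≤ q.1.2 → le (t p) (t q)

/-- The columns of `t` are strictly increasing with respect to the relation `lt`. -/
def ColsStrict (lam : ℕ →₀ ℕ) {B : Type*} (lt : B → B → Prop) (t : Tab lam B) : Prop :=
  ∀ p q : Cell lam, p.1.2 = q.1.2 → p.1.1 < q.1.1 → lt (t p) (t q)

/-- A semistandard tableau: rows weakly increasing, columns strictly increasing. -/
def IsSemistd (lam : ℕ →₀ ℕ) {B : Type*} [LinearOrder B] (t : Tab lam B) : Prop :=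
  RowsWeak lam (· ≤ ·) t ∧ ColsStrict lam (· < ·) t

/-- The semistandard `lam`-tableaux with entries in `B`. -/
abbrev SSYT (lam : ℕ →₀ ℕ) (B : Type*) [LinearOrder B] : Type _ :=
  {t : Tab lam B // IsSemistd lam t}

/-- The coefficient of the monomial `x^α = x_0^{α 0} x_1^{α 1} ⋯` in the Schur function
`s_lam`, namely the number of semistandard `lam`-tableaux with entries in `ℕ`
(the entry `b` corresponding to the variable `x_b`) having exactly `α b` entries
equal to `b` for every `b`. -/
noncomputable def schurCoeff (lam α : ℕ →₀ ℕ) : ℕ :=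
  Nat.card {t : Tab lam ℕ // IsSemistd lam t ∧
    ∀ b : ℕ, α b = (Finset.univ.filter (fun p : Cell lam => t p = b)).card}

/-- The set of entries of column `j` of the tableau `t`. -/
noncomputable def colSet (lam : ℕ →₀ ℕ) {B : Type*} [LinearOrder B] (t : Tab lam B) (j : ℕ) :
    Finset B :=
  (Finset.univ.filter (fun p : Cell lam => p.1.2 = j)).image t

/-- The total order on (column-standard) tableaux:  `t < u` if and only if, in the rightmost
column in which `t` and `u` differ, the greatest entry not appearing in both columns lies
in `u`. -/
def tabLT (lam : ℕ →₀ ℕ) {B : Type*} [LinearOrder B] (t u : Tab lam B) : Prop :=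
  ∃ j : ℕ, colSet lam t j ≠ colSet lam u j ∧
    (∀ j' : ℕ, j < j' → colSet lam t j' = colSet lam u j') ∧
    ∃ m : B, m ∈ colSet lam u j ∧ m ∉ colSet lam t j ∧
      ∀ x : B, ((x ∈ colSet lam t j ∧ x ∉ colSet lam u j) ∨
                (x ∈ colSet lam u j ∧ x ∉ colSet lam t j)) → x ≤ m

def tabLE (lam : ℕ →₀ ℕ) {B : Type*} [LinearOrder B] (t u : Tab lam B) : Prop :=
  t = u ∨ tabLT lam t u

/-- A plethystic semistandard tableau of shape `mu^nu`: a `nu`-tableau whose entries are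
semistandard `mu`-tableaux, with rows weakly increasing and columns strictly increasing
with respect to the total order `tabLT` on semistandard `mu`-tableaux. -/
def IsPSSYT (mu nu : ℕ →₀ ℕ) {B : Type*} [LinearOrder B] (T : Tab nu (SSYT mu B)) : Prop :=
  RowsWeak nu (fun s s' => tabLE mu s.1 s'.1) T ∧
  ColsStrict nu (fun s s' => tabLT mu s.1 s'.1) T

/-- `T` has weight `α`: for every letter `b`, the total number of entries equal to `b`
among the `mu`-tableau entries of `T` is `α b`. -/
def HasWeight (mu nu : ℕ →₀ ℕ) {B : Type*} [LinearOrder B] (T : Tab nu (SSYT mu B))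
    (α : B → ℕ) : Prop :=
  ∀ b : B, α b = ∑ P : Cell nu,
    (Finset.univ.filter (fun p : Cell mu => (T P).1 p = b)).card

/-- The coefficient of the monomial `x^α` in the plethysm `s_nu ∘ s_mu`, namely the number
of plethystic semistandard tableaux of shape `mu^nu` and weight `α`. -/
noncomputable def plethCoeff (nu mu α : ℕ →₀ ℕ) : ℕ :=
  Nat.card {T : Tab nu (SSYT mu ℕ) // IsPSSYT mu nu T ∧ HasWeight mu nu T (fun b => α b)}

end Pleth

namespace Pleth

/-- The canonical index type for the basis of `Sym^lam V`, where `V` is free with basis `B`: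
one multiset of entries (of the right size) for each row of the Young diagram. -/
abbrev RowData (lam : ℕ →₀ ℕ) (B : Type*) : Type _ := (i : ℕ) → Sym B (lam i)

/-- A concrete model for `Sym^lam V = ⊗_i Sym^{lam_i} V`, where `V` is the free `K`-module
with basis `{v_b : b ∈ B}`:  the free `K`-module on the GL-tabloids, i.e. on `RowData lam B`. -/
abbrev SymMod (lam : ℕ →₀ ℕ) (B : Type*) (K : Type*) [Semiring K] : Type _ :=
  RowData lam B →₀ K

/-- The multisets of row entries of a tableau. -/
def rowData (lam : ℕ →₀ ℕ) {B : Type*} (t : Tab lam B) : RowData lam B := fun i =>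
  ⟨(Finset.range (lam i)).attach.val.map
      (fun j => t ⟨(i, j.1), mem_cells.mpr (Finset.mem_range.mp j.2)⟩), by rw [Multiset.card_map, ← Finset.card_def, Finset.card_attach, Finset.card_range]⟩

/-- The GL-tabloid `f(t) = ⊗_i ∏_j v_{t(i,j)} ∈ Sym^lam V`. -/
noncomputable def tabloid (K : Type*) [CommRing K] (lam : ℕ →₀ ℕ) {B : Type*}
    (t : Tab lam B) : SymMod lam B K :=
  Finsupp.single (rowData lam t) 1

/-- The place-permutation action: `(t σ) (x) = t (σ⁻¹ x)`. -/
def permTab (lam : ℕ →₀ ℕ) {B : Type*} (t : Tab lam B) (σ : Equiv.Perm (Cell lam)) :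
    Tab lam B := fun p => t (σ⁻¹ p)

/-- `σ` preserves each column of the Young diagram, i.e. `σ ∈ CPP(lam)`. -/
def ColPres (lam : ℕ →₀ ℕ) (σ : Equiv.Perm (Cell lam)) : Prop :=
  ∀ p : Cell lam, (σ p).1.2 = p.1.2

/-- The GL-polytabloid `F(t) = ∑_{σ ∈ CPP(lam)} sgn(σ) f(tσ)`. -/
noncomputable def polytabloid (K : Type*) [CommRing K] (lam : ℕ →₀ ℕ) {B : Type*}
    (t : Tab lam B) : SymMod lam B K :=
  ∑ σ : Equiv.Perm (Cell lam),
    if ColPres lam σ then ((Equiv.Perm.sign σ : ℤ) • tabloid K lam (permTab lam t σ)) else 0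

/-- `∇^lam (V)`: the `K`-submodule of `Sym^lam V` spanned by the GL-polytabloids. -/
noncomputable def nabla (K : Type*) [CommRing K] (lam : ℕ →₀ ℕ) (B : Type*) :
    Submodule K (SymMod lam B K) :=
  Submodule.span K (Set.range (fun t : Tab lam B => polytabloid K lam t))

/-- The number of entries `≤ b` in row `i` of `t`; as a function of `i` this is the
composition `t^{≤ b}`. -/
noncomputable def rowCountLe (lam : ℕ →₀ ℕ) {B : Type*} [LinearOrder B] (t : Tab lam B)
    (b : B) (i : ℕ) : ℕ :=
  (Finset.univ.filter (fun p : Cell lam => p.1.1 = i ∧ t p ≤ b)).card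

/-- The dominance order on (row-semistandard) tableaux of the same shape:
`t ⊵ u` iff `t^{≤b} ⊵ u^{≤b}` for every `b`. -/
def TabDom (lam : ℕ →₀ ℕ) {B : Type*} [LinearOrder B] (t u : Tab lam B) : Prop :=
  ∀ b : B, ∀ k : ℕ,
    ∑ i ∈ Finset.range k, rowCountLe lam u b i ≤ ∑ i ∈ Finset.range k, rowCountLe lam t b i

/-- `t̄`: the tableau obtained from `t` by sorting each row into weakly increasing order. -/
noncomputable def rowsort (lam : ℕ →₀ ℕ) {B : Type*} [LinearOrder B] (t : Tab lam B) :
    Tab lam B :=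
  fun p => (List.insertionSort (· ≤ ·) ((List.range (lam p.1.1)).attach.map
      (fun j => t ⟨(p.1.1, j.1), mem_cells.mpr (List.mem_range.mp j.2)⟩))).getD p.1.2 (t p)

end Pleth

namespace Pleth

/-- The number of entries equal to `b` in the GL-tabloid datum `r`. -/
noncomputable def rdCount (lam : ℕ →₀ ℕ) {B : Type*} (r : RowData lam B) (b : B) : ℕ :=
  ∑ᶠ i : ℕ, Multiset.count b (r i).1

/-- The action of the diagonal matrix with diagonal entries `z` on `Sym^lam E`, where
`E = ℂ^d`: the GL-tabloid basis vector indexed by `r` is scaled by `∏_b z_b^{(number of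
entries equal to b in r)}`. -/
noncomputable def diagActL (lam : ℕ →₀ ℕ) (d : ℕ) (z : Fin d → ℂ) :
    SymMod lam (Fin d) ℂ →ₗ[ℂ] SymMod lam (Fin d) ℂ :=
  Finsupp.lsum ℂ (fun r => (∏ b : Fin d, z b ^ rdCount lam r b) • Finsupp.lsingle r)

/-- The `β`-weight space of the representation `∇^lam (E)` of `GL_d(ℂ)`: the set of
`v ∈ ∇^lam (E)` with `g ⬝ v = g_{11}^{β 0} ⋯ g_{dd}^{β (d-1)} v` for every invertible
diagonal matrix `g`. -/
noncomputable def weightSpace (lam : ℕ →₀ ℕ) (d : ℕ) (β : Fin d → ℕ) :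
    Submodule ℂ (SymMod lam (Fin d) ℂ) :=
  nabla ℂ lam (Fin d) ⊓ ⨅ z : {z : Fin d → ℂ // ∀ i, z i ≠ 0},
    LinearMap.eqLocus (diagActL lam d z.1) ((∏ i : Fin d, z.1 i ^ β i) • LinearMap.id)

/-- The formal character `Φ_{∇^lam(E)}(x_0, …, x_{d-1}) = ∑_β dim (∇^lam(E))_β · x^β`. -/
noncomputable def formalChar (lam : ℕ →₀ ℕ) (d : ℕ) : MvPolynomial (Fin d) ℂ :=
  ∑ᶠ β : Fin d → ℕ, (Module.finrank ℂ ↥(weightSpace lam d β) : MvPolynomial (Fin d) ℂ) *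
    ∏ i : Fin d, MvPolynomial.X i ^ β i

/-- The Schur polynomial `s_lam (x_0, …, x_{d-1}) = ∑_t x^t`, the sum over all semistandard
`lam`-tableaux with entries from `{0, …, d-1}`. -/
noncomputable def schurPoly (lam : ℕ →₀ ℕ) (d : ℕ) : MvPolynomial (Fin d) ℂ :=
  ∑ t : Tab lam (Fin d),
    if IsSemistd lam t then ∏ p : Cell lam, MvPolynomial.X (t p) else 0

/-- The action of the elementary matrix `X^{(c)}` (with a single `1` in position
`(c-1, c)`) of `gl_d(K)` on `Sym^lam E`, described on the GL-tabloid basis: the entry `c`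
is lowered to `c - 1` in each possible row, with multiplicity. -/
noncomputable def lowerVec (K : Type*) [CommRing K] (lam : ℕ →₀ ℕ) {d : ℕ} (c : Fin d)
    (r : RowData lam (Fin d)) : SymMod lam (Fin d) K :=
  ∑ᶠ i : ℕ, if h : c ∈ (r i).1 then
    (Multiset.count c (r i).1 : K) • Finsupp.single (Function.update r i
      ⟨(⟨c.1 - 1, Nat.lt_of_le_of_lt (Nat.sub_le _ _) c.2⟩ : Fin d) ::ₘ (r i).1.erase c, by
        have h2 := (r i).2
        have h1 : 0 < Multiset.card (r i).1 := Multiset.card_pos_iff_exists_mem.mpr ⟨c, h⟩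
        rw [Multiset.card_cons, Multiset.card_erase_of_mem h, Nat.pred_eq_sub_one]
        omega⟩) (1 : K)
  else 0

/-- The action of `X^{(c)} ∈ gl_d(K)` on `Sym^lam E`, as a linear map. -/
noncomputable def lowerL (K : Type*) [CommRing K] (lam : ℕ →₀ ℕ) {d : ℕ} (c : Fin d) :
    SymMod lam (Fin d) K →ₗ[K] SymMod lam (Fin d) K :=
  Finsupp.lsum K (fun r => LinearMap.toSpanSingleton K _ (lowerVec K lam c r))

/-- The row-sorted tableau realizing a GL-tabloid datum `r`. -/
noncomputable def tabOf (lam : ℕ →₀ ℕ) {B : Type*} [LinearOrder B] (r : RowData lam B) :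
    Tab lam B :=
  fun p => (Multiset.sort (r p.1.1).1 (· ≤ ·)).get ⟨p.1.2, by
    rw [Multiset.length_sort, (r p.1.1).2]; exact mem_cells.mp p.2⟩

/-- The action of a matrix `g` on `Sym^lam E`, `E = K^d`, described on the GL-tabloid
basis by multilinear expansion of `g ⬝ f(t) = ⊗_i ∏_j (g v_{t(i,j)})`. -/
noncomputable def matActL (K : Type*) [CommRing K] (lam : ℕ →₀ ℕ) (d : ℕ)
    (g : Matrix (Fin d) (Fin d) K) : SymMod lam (Fin d) K →ₗ[K] SymMod lam (Fin d) K :=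
  Finsupp.lsum K (fun r => LinearMap.toSpanSingleton K _
    (∑ u : Tab lam (Fin d), (∏ p : Cell lam, g (u p) (tabOf lam r p)) • tabloid K lam u))

end Pleth
namespace Pleth

open Finset

variable {lam : ℕ →₀ ℕ} {d : ℕ}

-- basic instances
noncomputable instance : Fintype (Cell lam) := FinsetCoe.fintype _

instance (B : Type*) [Finite B] : Finite (RowData lam B) := by
  classical
  have key : Function.Injective
      (fun (r : RowData lam B) => (fun i : lam.support => r i.1)) := by
    intro r s h
    funext i
    by_cases hi : i ∈ lam.support
    · exact congrFun h ⟨i, hi⟩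
    · have hz : lam i = 0 := by
        by_contra h0; exact hi (Finsupp.mem_support_iff.mpr h0)
      have : Subsingleton (Sym B (lam i)) := by
        rw [hz]; infer_instance
      exact Subsingleton.elim _ _
  cases nonempty_fintype B
  exact Finite.of_injective _ key

noncomputable instance (B : Type*) [Finite B] : Fintype (RowData lam B) :=
  Fintype.ofFinite _

end Pleth

theorem Equiv.Perm.apply_inv_self {α : Type*} (f : Equiv.Perm α) (x : α) : f (f⁻¹ x) = x :=
  f.apply_symm_apply x

theorem Equiv.Perm.inv_apply_self {α : Type*} (f : Equiv.Perm α) (x : α) : f⁻¹ (f x) = x :=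
  f.symm_apply_apply x

namespace Pleth

open Finset Equiv

variable {lam : ℕ →₀ ℕ} {B : Type*}

lemma permTab_permTab (t : Tab lam B) (a b : Equiv.Perm (Cell lam)) :
    permTab lam (permTab lam t a) b = permTab lam t (b * a) := by
  funext p; simp [permTab, mul_inv_rev]

lemma permTab_one (t : Tab lam B) : permTab lam t 1 = t := by
  funext p; simp [permTab]

lemma colPres_one : ColPres lam 1 := fun _ => rfl

lemma colPres_mul {a b : Equiv.Perm (Cell lam)} (ha : ColPres lam a) (hb : ColPres lam b) :
    ColPres lam (a * b) := fun p => by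
  rw [Equiv.Perm.mul_apply, ha, hb]

lemma colPres_inv {a : Equiv.Perm (Cell lam)} (ha : ColPres lam a) : ColPres lam a⁻¹ := by
  intro p
  have := ha (a⁻¹ p)
  rw [Equiv.Perm.apply_inv_self] at this
  exact this.symm

/-- `σ` preserves each row. -/
def RowPres (lam : ℕ →₀ ℕ) (σ : Equiv.Perm (Cell lam)) : Prop :=
  ∀ p : Cell lam, (σ p).1.1 = p.1.1

lemma rowPres_inv {a : Equiv.Perm (Cell lam)} (ha : RowPres lam a) : RowPres lam a⁻¹ := by
  intro p
  have := ha (a⁻¹ p)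
  rw [Equiv.Perm.apply_inv_self] at this
  exact this.symm

lemma rowPres_swap {p q : Cell lam} (h : p.1.1 = q.1.1) : RowPres lam (Equiv.swap p q) := by
  intro x
  rcases Equiv.swap_apply_def p q x with _
  by_cases hx : x = p
  · subst hx; rw [Equiv.swap_apply_left, ← h]
  by_cases hy : x = q
  · subst hy; rw [Equiv.swap_apply_right, h]
  · rw [Equiv.swap_apply_of_ne_of_ne hx hy]

lemma colPres_swap {p q : Cell lam} (h : p.1.2 = q.1.2) : ColPres lam (Equiv.swap p q) := by
  intro x
  by_cases hx : x = p
  · subst hx; rw [Equiv.swap_apply_left, ← h]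
  by_cases hy : x = q
  · subst hy; rw [Equiv.swap_apply_right, h]
  · rw [Equiv.swap_apply_of_ne_of_ne hx hy]

/-- cells with equal coordinates are equal -/
lemma cell_ext {p q : Cell lam} (h1 : p.1.1 = q.1.1) (h2 : p.1.2 = q.1.2) : p = q :=
  Subtype.ext (Prod.ext h1 h2)

/-- The generic row-fibration of a sum over all cells. -/
lemma sum_cells_eq {M : Type*} [AddCommMonoid M] (f : Cell lam → M) :
    ∑ p : Cell lam, f p
      = ∑ i ∈ lam.support, ∑ j ∈ (Finset.range (lam i)).attach,
          f ⟨(i, j.1), mem_cells.mpr (Finset.mem_range.mp j.2)⟩ := by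
  classical
  rw [← Finset.sum_fiberwise_of_maps_to (g := fun p : Cell lam => p.1.1)
    (t := lam.support) (fun p _ => by
      have h := mem_cells.mp p.2
      exact Finsupp.mem_support_iff.mpr (by intro h0; rw [h0] at h; omega)) f]
  refine Finset.sum_congr rfl (fun i hi => ?_)
  refine Finset.sum_bij' (i := fun p hp => (⟨p.1.2, Finset.mem_range.mpr (by
      have hrow : (p : ℕ × ℕ).1 = i := (Finset.mem_filter.mp hp).2
      have h2 := mem_cells.mp p.2
      rw [hrow] at h2
      exact h2)⟩ : {x // x ∈ Finset.range (lam i)}))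
    (j := fun j _ => ⟨(i, j.1), mem_cells.mpr (Finset.mem_range.mp j.2)⟩)
    ?_ ?_ ?_ ?_ ?_
  · intro a _; exact Finset.mem_attach _ _
  · intro a _
    exact Finset.mem_filter.mpr ⟨Finset.mem_univ _, rfl⟩
  · rintro ⟨⟨a1, a2⟩, hm⟩ ha
    have h1 : a1 = i := (Finset.mem_filter.mp ha).2
    subst h1
    exact Subtype.ext rfl
  · intro a _
    exact Subtype.ext rfl
  · rintro ⟨⟨a1, a2⟩, hm⟩ ha
    have h1 : a1 = i := (Finset.mem_filter.mp ha).2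
    subst h1
    rfl

end Pleth
namespace Pleth

open Finset Equiv

variable {lam : ℕ →₀ ℕ} {B : Type*}

lemma cellMem_of_rowPres {σ : Equiv.Perm (Cell lam)} (hσ : RowPres lam σ) (p : Cell lam) :
    ((p : ℕ × ℕ).1, ((σ p : Cell lam) : ℕ × ℕ).2) ∈ cells lam :=
  mem_cells.mpr (by have h := mem_cells.mp (σ p).2; rw [hσ p] at h; exact h)

lemma cell_eq_of_rowPres {σ : Equiv.Perm (Cell lam)} (hσ : RowPres lam σ) (p : Cell lam) :
    (⟨((p : ℕ × ℕ).1, ((σ p : Cell lam) : ℕ × ℕ).2), cellMem_of_rowPres hσ p⟩ : Cell lam)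
      = σ p :=
  cell_ext (hσ p).symm rfl

lemma count_rowData (t : Tab lam B) (i : ℕ) (b : B) :
    Multiset.count b (rowData lam t i).1
      = ((Finset.range (lam i)).attach.filter
          (fun j => t ⟨(i, j.1), mem_cells.mpr (Finset.mem_range.mp j.2)⟩ = b)).card := by
  classical
  show Multiset.count b (((Finset.range (lam i)).attach.val).map
      (fun j => t ⟨(i, j.1), mem_cells.mpr (Finset.mem_range.mp j.2)⟩)) = _
  rw [Multiset.count_map, Finset.card, Finset.filter_val]
  congr 1
  apply Multiset.filter_congr
  intro x _
  exact eq_comm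

lemma rowData_permTab_of_rowPres (t : Tab lam B) {σ : Equiv.Perm (Cell lam)}
    (hσ : RowPres lam σ) : rowData lam (permTab lam t σ) = rowData lam t := by
  classical
  funext i
  apply Subtype.ext
  ext b
  rw [count_rowData, count_rowData]
  have hσ' : RowPres lam σ⁻¹ := rowPres_inv hσ
  refine Finset.card_bij'
    (i := fun j hj => (⟨((σ⁻¹ ⟨(i, j.1), mem_cells.mpr (Finset.mem_range.mp j.2)⟩ :
        Cell lam) : ℕ × ℕ).2, Finset.mem_range.mpr ?_⟩ : {x // x ∈ Finset.range (lam i)}))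
    (j := fun j hj => (⟨((σ ⟨(i, j.1), mem_cells.mpr (Finset.mem_range.mp j.2)⟩ :
        Cell lam) : ℕ × ℕ).2, Finset.mem_range.mpr ?_⟩ : {x // x ∈ Finset.range (lam i)}))
    ?_ ?_ ?_ ?_
  · -- mem range for σ⁻¹
    have h := mem_cells.mp (σ⁻¹ ⟨(i, j.1), mem_cells.mpr (Finset.mem_range.mp j.2)⟩).2
    rw [hσ' _] at h
    exact h
  · have h := mem_cells.mp (σ ⟨(i, j.1), mem_cells.mpr (Finset.mem_range.mp j.2)⟩).2
    rw [hσ _] at h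
    exact h
  · -- maps into filter (forward)
    intro a ha
    refine Finset.mem_filter.mpr ⟨Finset.mem_attach _ _, ?_⟩
    have hmem := (Finset.mem_filter.mp ha).2
    have hcell := cell_eq_of_rowPres hσ' ⟨(i, a.1), mem_cells.mpr (Finset.mem_range.mp a.2)⟩
    simp only [permTab] at hmem ⊢
    rw [show (⟨(i, _), _⟩ : Cell lam) = σ⁻¹ ⟨(i, a.1), mem_cells.mpr (Finset.mem_range.mp a.2)⟩
      from hcell]
    exact hmem
  · -- maps into filter (backward)
    intro a ha
    refine Finset.mem_filter.mpr ⟨Finset.mem_attach _ _, ?_⟩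
    have hmem := (Finset.mem_filter.mp ha).2
    have hcell := cell_eq_of_rowPres hσ ⟨(i, a.1), mem_cells.mpr (Finset.mem_range.mp a.2)⟩
    simp only [permTab]
    rw [show (⟨(i, _), _⟩ : Cell lam) = σ ⟨(i, a.1), mem_cells.mpr (Finset.mem_range.mp a.2)⟩
      from hcell]
    simp only [Equiv.Perm.inv_apply_self]
    exact hmem
  · -- left inverse
    intro a ha
    apply Subtype.ext
    have hcell := cell_eq_of_rowPres hσ' ⟨(i, a.1), mem_cells.mpr (Finset.mem_range.mp a.2)⟩
    exact (congrArg (fun c : Cell lam => ((σ c : Cell lam) : ℕ × ℕ).2) hcell).trans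
      (by rw [Equiv.Perm.apply_inv_self])
  · -- right inverse
    intro a ha
    apply Subtype.ext
    have hcell := cell_eq_of_rowPres hσ ⟨(i, a.1), mem_cells.mpr (Finset.mem_range.mp a.2)⟩
    exact (congrArg (fun c : Cell lam => ((σ⁻¹ c : Cell lam) : ℕ × ℕ).2) hcell).trans
      (by rw [Equiv.Perm.inv_apply_self])

/-- The content of a tableau. -/
noncomputable def ctB (t : Tab lam B) (b : B) : ℕ :=
  (Finset.univ.filter (fun p : Cell lam => t p = b)).card

lemma card_univ_filter_eq (P : Cell lam → Prop) [DecidablePred P] :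
    (Finset.univ.filter P).card
      = ∑ i ∈ lam.support, ((Finset.range (lam i)).attach.filter
          (fun j => P ⟨(i, j.1), mem_cells.mpr (Finset.mem_range.mp j.2)⟩)).card := by
  classical
  rw [Finset.card_filter]
  rw [sum_cells_eq (fun p => if P p then 1 else 0)]
  exact Finset.sum_congr rfl (fun i _ => (Finset.card_filter _ _).symm)

lemma rdCount_rowData (t : Tab lam B) (b : B) :
    rdCount lam (rowData lam t) b = ctB t b := by
  classical
  have hs : Function.support (fun i => Multiset.count b (rowData lam t i).1) ⊆ ↑lam.support := by
    intro i hi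
    simp only [Function.mem_support, ne_eq] at hi
    by_contra hmem
    apply hi
    have hz : lam i = 0 := by
      by_contra h0
      exact hmem (Finsupp.mem_support_iff.mpr h0)
    rw [count_rowData]
    apply Finset.card_eq_zero.mpr
    apply Finset.eq_empty_of_forall_notMem
    intro j hj
    have h3 : (j : ℕ) < lam i := Finset.mem_range.mp j.2
    omega
  rw [rdCount, finsum_eq_sum_of_support_subset _ hs]
  unfold ctB
  rw [card_univ_filter_eq (fun p => t p = b)]
  exact Finset.sum_congr rfl (fun i _ => count_rowData t i b)

lemma ctB_permTab (t : Tab lam B) (σ : Equiv.Perm (Cell lam)) (b : B) :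
    ctB (permTab lam t σ) b = ctB t b := by
  classical
  unfold ctB
  refine Finset.card_bij' (i := fun p _ => σ⁻¹ p) (j := fun p _ => σ p) ?_ ?_ ?_ ?_
  · intro a ha
    exact Finset.mem_filter.mpr ⟨Finset.mem_univ _, (Finset.mem_filter.mp ha).2⟩
  · intro a ha
    refine Finset.mem_filter.mpr ⟨Finset.mem_univ _, ?_⟩
    have := (Finset.mem_filter.mp ha).2
    simpa [permTab] using this
  · intro a _; simp
  · intro a _; simp

end Pleth
namespace Pleth

open Finset Equiv

variable {lam : ℕ →₀ ℕ} {B : Type*}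

lemma sign_sq (τ : Equiv.Perm (Cell lam)) :
    (Equiv.Perm.sign τ : ℤ) * (Equiv.Perm.sign τ : ℤ) = 1 := by
  rw [← Units.val_mul, Int.units_mul_self, Units.val_one]

lemma polytabloid_permTab (K : Type*) [CommRing K] (t : Tab lam B) {τ : Equiv.Perm (Cell lam)}
    (hτ : ColPres lam τ) :
    polytabloid K lam (permTab lam t τ) = (Equiv.Perm.sign τ : ℤ) • polytabloid K lam t := by
  have key : ∀ σ : Equiv.Perm (Cell lam),
      (if ColPres lam σ then ((Equiv.Perm.sign σ : ℤ) •
          tabloid K lam (permTab lam (permTab lam t τ) σ)) else 0)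
        = (Equiv.Perm.sign τ : ℤ) • (fun σ' => if ColPres lam σ' then
            ((Equiv.Perm.sign σ' : ℤ) • tabloid K lam (permTab lam t σ')) else 0)
            ((Equiv.mulRight τ) σ) := by
    intro σ
    rw [Equiv.coe_mulRight]; beta_reduce
    by_cases hcp : ColPres lam σ
    · rw [if_pos hcp, if_pos (colPres_mul hcp hτ)]
      rw [permTab_permTab]
      rw [smul_smul]
      congr 1
      have h1 : (Equiv.Perm.sign (σ * τ) : ℤ)
          = (Equiv.Perm.sign σ : ℤ) * (Equiv.Perm.sign τ : ℤ) := by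
        rw [map_mul, Units.val_mul]
      rw [h1]
      have h2 := sign_sq (lam := lam) τ
      linear_combination (-(Equiv.Perm.sign σ : ℤ)) * h2
    · rw [if_neg hcp, if_neg, smul_zero]
      intro hcp2
      apply hcp
      have := colPres_mul hcp2 (colPres_inv hτ)
      rwa [mul_inv_cancel_right] at this
  show (∑ σ : Equiv.Perm (Cell lam), _) = _
  rw [Finset.sum_congr rfl (fun σ _ => key σ)]
  rw [← Finset.smul_sum]
  congr 1
  exact Equiv.sum_comp (Equiv.mulRight τ) (fun σ' => if ColPres lam σ' then
    ((Equiv.Perm.sign σ' : ℤ) • tabloid K lam (permTab lam t σ')) else 0)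

lemma polytabloid_eq_zero {p q : Cell lam} (t : Tab lam B) (hpq : p ≠ q)
    (hcol : (p : ℕ × ℕ).2 = (q : ℕ × ℕ).2) (hval : t p = t q) :
    polytabloid ℂ lam t = 0 := by
  set θ := Equiv.swap p q with hθ
  have hθcp : ColPres lam θ := colPres_swap hcol
  have htθ : ∀ x, t (θ x) = t x := by
    intro x
    by_cases hx : x = p
    · subst hx; rw [hθ, Equiv.swap_apply_left]; exact hval.symm
    by_cases hy : x = q
    · subst hy; rw [hθ, Equiv.swap_apply_right]; exact hval
    · rw [hθ, Equiv.swap_apply_of_ne_of_ne hx hy]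
  set S := polytabloid ℂ lam t with hS
  have key : ∀ σ : Equiv.Perm (Cell lam),
      (fun σ' => if ColPres lam σ' then ((Equiv.Perm.sign σ' : ℤ) •
          tabloid ℂ lam (permTab lam t σ')) else 0) ((Equiv.mulRight θ) σ)
        = -(if ColPres lam σ then ((Equiv.Perm.sign σ : ℤ) •
            tabloid ℂ lam (permTab lam t σ)) else 0) := by
    intro σ
    rw [Equiv.coe_mulRight]; beta_reduce
    by_cases hcp : ColPres lam σ
    · rw [if_pos (colPres_mul hcp hθcp), if_pos hcp]
      have htab : permTab lam t (σ * θ) = permTab lam t σ := by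
        funext x
        show t ((σ * θ)⁻¹ x) = t (σ⁻¹ x)
        rw [mul_inv_rev, Equiv.Perm.mul_apply]
        rw [show θ⁻¹ = θ from Equiv.swap_inv p q]
        exact htθ _
      rw [htab]
      rw [map_mul, Units.val_mul, Equiv.Perm.sign_swap hpq]
      simp [neg_smul]
    · rw [if_neg hcp, if_neg, neg_zero]
      intro hcp2
      apply hcp
      have := colPres_mul hcp2 (colPres_inv hθcp)
      rwa [mul_inv_cancel_right] at this
  have hSneg : S = -S := by
    conv_lhs => rw [hS]
    show (∑ σ : Equiv.Perm (Cell lam), _) = _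
    rw [← Equiv.sum_comp (Equiv.mulRight θ) (fun σ' => if ColPres lam σ' then
      ((Equiv.Perm.sign σ' : ℤ) • tabloid ℂ lam (permTab lam t σ')) else 0)]
    rw [Finset.sum_congr rfl (fun σ _ => key σ)]
    rw [Finset.sum_neg_distrib]
    rfl
  have h2 : (2 : ℂ) • S = 0 := by
    rw [two_smul]
    nth_rewrite 1 [hSneg]
    simp
  rcases smul_eq_zero.mp h2 with h | h
  · exact absurd h two_ne_zero
  · exact h

end Pleth
namespace Pleth

open Finset Equiv

variable {lam : ℕ →₀ ℕ} {B : Type*}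

/-- Permutations supported inside `C`. -/
noncomputable def suppIn (C : Finset (Cell lam)) : Finset (Equiv.Perm (Cell lam)) :=
  Finset.univ.filter (fun g => ∀ p ∉ C, g p = p)

lemma mem_suppIn {C : Finset (Cell lam)} {g : Equiv.Perm (Cell lam)} :
    g ∈ suppIn C ↔ ∀ p ∉ C, g p = p := by
  simp [suppIn]

lemma one_mem_suppIn {C : Finset (Cell lam)} : (1 : Equiv.Perm (Cell lam)) ∈ suppIn C :=
  mem_suppIn.mpr (fun _ _ => rfl)

lemma mul_mem_suppIn {C : Finset (Cell lam)} {g h : Equiv.Perm (Cell lam)}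
    (hg : g ∈ suppIn C) (hh : h ∈ suppIn C) : g * h ∈ suppIn C := by
  rw [mem_suppIn] at *
  intro p hp
  rw [Equiv.Perm.mul_apply, hh p hp, hg p hp]

lemma suppIn_maps {C : Finset (Cell lam)} {g : Equiv.Perm (Cell lam)}
    (hg : g ∈ suppIn C) {p : Cell lam} (hp : p ∈ C) : g p ∈ C := by
  by_contra hgp
  have h1 : g (g p) = g p := mem_suppIn.mp hg _ hgp
  have h2 : g p = p := g.injective h1
  rw [h2] at hgp
  exact hgp hp

lemma inv_mem_suppIn {C : Finset (Cell lam)} {g : Equiv.Perm (Cell lam)}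
    (hg : g ∈ suppIn C) : g⁻¹ ∈ suppIn C := by
  rw [mem_suppIn]
  intro p hp
  have := mem_suppIn.mp hg p hp
  conv_lhs => rw [← this]
  simp

lemma eq_zero_of_self_eq_neg {M : Type*} [AddCommGroup M] [Module ℂ M] {x : M}
    (h : x = -x) : x = 0 := by
  have h2 : (2 : ℂ) • x = 0 := by
    rw [two_smul]
    nth_rewrite 1 [h]
    simp
  rcases smul_eq_zero.mp h2 with h | h
  · exact absurd h two_ne_zero
  · exact h

/-- Key vanishing: if `C` contains two distinct cells in the same row, the signed sum of
tabloids over permutations supported in `C` vanishes. -/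
lemma sum_suppIn_tabloid_eq_zero (s : Tab lam B) {C : Finset (Cell lam)} {p q : Cell lam}
    (hp : p ∈ C) (hq : q ∈ C) (hpq : p ≠ q) (hrow : (p : ℕ × ℕ).1 = (q : ℕ × ℕ).1) :
    ∑ ρ ∈ suppIn C, (Equiv.Perm.sign ρ : ℤ) • tabloid ℂ lam (permTab lam s ρ) = 0 := by
  set θ := Equiv.swap p q with hθdef
  have hθ : θ ∈ suppIn C := by
    rw [mem_suppIn]
    intro x hx
    apply Equiv.swap_apply_of_ne_of_ne
    · rintro rfl; exact hx hp
    · rintro rfl; exact hx hq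
  apply eq_zero_of_self_eq_neg
  have hre : ∑ ρ ∈ suppIn C, (Equiv.Perm.sign ρ : ℤ) • tabloid ℂ lam (permTab lam s ρ)
      = ∑ ρ ∈ suppIn C, (Equiv.Perm.sign (θ * ρ) : ℤ) •
          tabloid ℂ lam (permTab lam s (θ * ρ)) := by
    refine Finset.sum_nbij' (i := fun ρ => θ * ρ) (j := fun ρ => θ * ρ) ?_ ?_ ?_ ?_ ?_
    · intro a ha; exact mul_mem_suppIn hθ ha
    · intro a ha; exact mul_mem_suppIn hθ ha
    · intro a _
      show θ * (θ * a) = a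
      rw [← mul_assoc, hθdef, Equiv.swap_mul_self, one_mul]
    · intro a _
      show θ * (θ * a) = a
      rw [← mul_assoc, hθdef, Equiv.swap_mul_self, one_mul]
    · intro a _
      have hcan : θ * (θ * a) = a := by
        rw [← mul_assoc, hθdef, Equiv.swap_mul_self, one_mul]
      show (Equiv.Perm.sign a : ℤ) • tabloid ℂ lam (permTab lam s a)
          = (Equiv.Perm.sign (θ * (θ * a)) : ℤ) • tabloid ℂ lam (permTab lam s (θ * (θ * a)))
      rw [hcan]
  nth_rewrite 1 [hre]
  rw [← Finset.sum_neg_distrib]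
  apply Finset.sum_congr rfl
  intro ρ _
  have hsign : (Equiv.Perm.sign (θ * ρ) : ℤ) = -(Equiv.Perm.sign ρ : ℤ) := by
    rw [map_mul, Units.val_mul, hθdef, Equiv.Perm.sign_swap hpq]
    simp
  have htab : tabloid ℂ lam (permTab lam s (θ * ρ)) = tabloid ℂ lam (permTab lam s ρ) := by
    rw [← permTab_permTab]
    show Finsupp.single (rowData lam (permTab lam (permTab lam s ρ) θ)) 1 = _
    rw [rowData_permTab_of_rowPres _ (rowPres_swap hrow)]
    rfl
  rw [hsign, htab, neg_smul]

/-- The Garnir vanishing: if every column-preserving image of `AB` contains two distinct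
cells in a common row, the signed sum of polytabloids over permutations supported in `AB`
vanishes. -/
lemma garnir_sum_zero (t : Tab lam B) {AB : Finset (Cell lam)}
    (hAB : ∀ σ : Equiv.Perm (Cell lam), ColPres lam σ →
      ∃ p q : Cell lam, p ∈ AB.image σ ∧ q ∈ AB.image σ ∧ p ≠ q ∧
        (p : ℕ × ℕ).1 = (q : ℕ × ℕ).1) :
    ∑ g ∈ suppIn AB, (Equiv.Perm.sign g : ℤ) • polytabloid ℂ lam (permTab lam t g) = 0 := by
  have expand : ∀ g : Equiv.Perm (Cell lam),
      (Equiv.Perm.sign g : ℤ) • polytabloid ℂ lam (permTab lam t g)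
        = ∑ σ : Equiv.Perm (Cell lam), (if ColPres lam σ then
            ((Equiv.Perm.sign g : ℤ) * (Equiv.Perm.sign σ : ℤ)) •
              tabloid ℂ lam (permTab lam t (σ * g)) else 0) := by
    intro g
    rw [polytabloid, Finset.smul_sum]
    apply Finset.sum_congr rfl
    intro σ _
    rw [smul_ite, smul_zero, smul_smul, permTab_permTab]
  rw [Finset.sum_congr rfl (fun g _ => expand g)]
  rw [Finset.sum_comm]
  apply Finset.sum_eq_zero
  intro σ _
  by_cases hcp : ColPres lam σ
  · simp only [if_pos hcp]
    obtain ⟨p, q, hp, hq, hpq, hrow⟩ := hAB σ hcp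
    have inner : ∑ g ∈ suppIn AB,
        ((Equiv.Perm.sign g : ℤ) * (Equiv.Perm.sign σ : ℤ)) •
          tabloid ℂ lam (permTab lam t (σ * g))
        = (Equiv.Perm.sign σ : ℤ) • ∑ ρ ∈ suppIn (AB.image σ),
            (Equiv.Perm.sign ρ : ℤ) • tabloid ℂ lam (permTab lam (permTab lam t σ) ρ) := by
      rw [Finset.smul_sum]
      refine Finset.sum_nbij' (i := fun g => σ * g * σ⁻¹) (j := fun ρ => σ⁻¹ * ρ * σ)
        ?_ ?_ ?_ ?_ ?_
      · intro g hg
        rw [mem_suppIn]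
        intro x hx
        have hxs : σ⁻¹ x ∉ AB := by
          intro hmem
          exact hx (Finset.mem_image.mpr ⟨σ⁻¹ x, hmem, by simp⟩)
        simp only [Equiv.Perm.mul_apply]
        rw [mem_suppIn.mp hg _ hxs]
        simp
      · intro ρ hρ
        rw [mem_suppIn]
        intro x hx
        have hxs : σ x ∉ AB.image σ := by
          intro hmem
          obtain ⟨a, ha, haa⟩ := Finset.mem_image.mp hmem
          exact hx (by rwa [← σ.injective haa])
        simp only [Equiv.Perm.mul_apply]
        rw [mem_suppIn.mp hρ _ hxs]
        simp
      · intro g _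
        show σ⁻¹ * (σ * g * σ⁻¹) * σ = g
        group
      · intro ρ _
        show σ * (σ⁻¹ * ρ * σ) * σ⁻¹ = ρ
        group
      · intro g _
        have hsign : (Equiv.Perm.sign (σ * g * σ⁻¹) : ℤ) = (Equiv.Perm.sign g : ℤ) := by
          rw [map_mul, map_mul, Equiv.Perm.sign_inv]
          rw [Units.val_mul, Units.val_mul]
          have := sign_sq (lam := lam) σ
          linear_combination (Equiv.Perm.sign g : ℤ) * this
        show ((Equiv.Perm.sign g : ℤ) * (Equiv.Perm.sign σ : ℤ)) •
            tabloid ℂ lam (permTab lam t (σ * g))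
          = (Equiv.Perm.sign σ : ℤ) • ((Equiv.Perm.sign (σ * g * σ⁻¹) : ℤ) •
              tabloid ℂ lam (permTab lam (permTab lam t σ) (σ * g * σ⁻¹)))
        have harg : σ * g * σ⁻¹ * σ = σ * g := by group
        rw [hsign, permTab_permTab, smul_smul, harg,
          mul_comm ((Equiv.Perm.sign g : ℤ)) ((Equiv.Perm.sign σ : ℤ))]
    rw [inner, sum_suppIn_tabloid_eq_zero _ hp hq hpq hrow, smul_zero]
  · simp only [if_neg hcp]
    exact Finset.sum_const_zero

end Pleth
namespace Pleth

open Finset Equiv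

variable {lam : ℕ →₀ ℕ}

/-- The lower part of column `j` (rows `≥ i`). -/
noncomputable def GA (lam : ℕ →₀ ℕ) (i j : ℕ) : Finset (Cell lam) :=
  Finset.univ.filter (fun p => (p : ℕ × ℕ).2 = j ∧ i ≤ (p : ℕ × ℕ).1)

/-- The upper part of column `j+1` (rows `≤ i`). -/
noncomputable def GBs (lam : ℕ →₀ ℕ) (i j : ℕ) : Finset (Cell lam) :=
  Finset.univ.filter (fun p => (p : ℕ × ℕ).2 = j + 1 ∧ (p : ℕ × ℕ).1 ≤ i)

noncomputable def GAB (lam : ℕ →₀ ℕ) (i j : ℕ) : Finset (Cell lam) :=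
  GA lam i j ∪ GBs lam i j

lemma garnir_pigeonhole (hlam : IsPartition lam) {i j : ℕ}
    (h1 : ((i, j) : ℕ × ℕ) ∈ cells lam) (h2 : ((i, j + 1) : ℕ × ℕ) ∈ cells lam) :
    ∀ σ : Equiv.Perm (Cell lam), ColPres lam σ →
      ∃ p q : Cell lam, p ∈ (GAB lam i j).image σ ∧ q ∈ (GAB lam i j).image σ ∧ p ≠ q ∧
        (p : ℕ × ℕ).1 = (q : ℕ × ℕ).1 := by
  classical
  set RJ := lam.support.filter (fun r => j < lam r) with hRJ
  have hmemRJ : ∀ r : ℕ, j < lam r → r ∈ RJ := by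
    intro r hr
    exact Finset.mem_filter.mpr ⟨Finsupp.mem_support_iff.mpr (by omega), hr⟩
  have hcell1 : j < lam i := mem_cells.mp h1
  have hcell2 : j + 1 < lam i := mem_cells.mp h2
  have hRJ_ge : i + 1 ≤ RJ.card := by
    have hsub : Finset.range (i + 1) ⊆ RJ := by
      intro r hr
      have hri : r ≤ i := by
        have := Finset.mem_range.mp hr; omega
      exact hmemRJ r (lt_of_lt_of_le hcell1 (hlam r i hri))
    calc i + 1 = (Finset.range (i + 1)).card := by rw [Finset.card_range]
    _ ≤ RJ.card := Finset.card_le_card hsub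
  have hA : i + (GA lam i j).card = RJ.card := by
    have hbij : (GA lam i j).card = (RJ.filter (fun r => i ≤ r)).card := by
      refine Finset.card_bij (fun p _ => (p : ℕ × ℕ).1) ?_ ?_ ?_
      · intro p hp
        obtain ⟨_, hcol, hrow⟩ := Finset.mem_filter.mp hp
        refine Finset.mem_filter.mpr ⟨hmemRJ _ ?_, hrow⟩
        show j < lam (p : ℕ × ℕ).1
        have := mem_cells.mp p.2
        omega
      · intro p hp p' hp' hpp
        obtain ⟨_, hcol, _⟩ := Finset.mem_filter.mp hp
        obtain ⟨_, hcol', _⟩ := Finset.mem_filter.mp hp'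
        exact cell_ext hpp (hcol.trans hcol'.symm)
      · intro r hr
        obtain ⟨hrRJ, hir⟩ := Finset.mem_filter.mp hr
        have hjr : j < lam r := (Finset.mem_filter.mp hrRJ).2
        refine ⟨⟨(r, j), mem_cells.mpr hjr⟩, ?_, rfl⟩
        exact Finset.mem_filter.mpr ⟨Finset.mem_univ _, rfl, hir⟩
    have hlt : RJ.filter (fun r => ¬ i ≤ r) = Finset.range i := by
      ext r
      constructor
      · intro hr
        obtain ⟨_, hri⟩ := Finset.mem_filter.mp hr
        exact Finset.mem_range.mpr (by omega)
      · intro hr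
        have hri : r < i := Finset.mem_range.mp hr
        refine Finset.mem_filter.mpr ⟨hmemRJ r ?_, by omega⟩
        exact lt_of_lt_of_le hcell1 (hlam r i (by omega))
    have hsplit := Finset.card_filter_add_card_filter_not
      (s := RJ) (p := fun r => i ≤ r)
    rw [hlt] at hsplit
    rw [Finset.card_range] at hsplit
    omega
  have hB : (GBs lam i j).card = i + 1 := by
    have hbij : (GBs lam i j).card = (Finset.range (i + 1)).card := by
      refine Finset.card_bij (fun p _ => (p : ℕ × ℕ).1) ?_ ?_ ?_
      · intro p hp
        obtain ⟨_, hcol, hrow⟩ := Finset.mem_filter.mp hp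
        show (p : ℕ × ℕ).1 ∈ Finset.range (i + 1)
        exact Finset.mem_range.mpr (by omega)
      · intro p hp p' hp' hpp
        obtain ⟨_, hcol, _⟩ := Finset.mem_filter.mp hp
        obtain ⟨_, hcol', _⟩ := Finset.mem_filter.mp hp'
        exact cell_ext hpp (hcol.trans hcol'.symm)
      · intro r hr
        have hri : r ≤ i := by
          have := Finset.mem_range.mp hr; omega
        have hjr : j + 1 < lam r := lt_of_lt_of_le hcell2 (hlam r i hri)
        refine ⟨⟨(r, j + 1), mem_cells.mpr hjr⟩, ?_, rfl⟩
        exact Finset.mem_filter.mpr ⟨Finset.mem_univ _, rfl, hri⟩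
    rw [hbij, Finset.card_range]
  intro σ hσ
  set RA := (GA lam i j).image (fun p => ((σ p : Cell lam) : ℕ × ℕ).1) with hRA
  set RB := (GBs lam i j).image (fun p => ((σ p : Cell lam) : ℕ × ℕ).1) with hRB
  have hcolA : ∀ p ∈ GA lam i j, ((σ p : Cell lam) : ℕ × ℕ).2 = j := by
    intro p hp
    rw [hσ p]
    exact (Finset.mem_filter.mp hp).2.1
  have hcolB : ∀ p ∈ GBs lam i j, ((σ p : Cell lam) : ℕ × ℕ).2 = j + 1 := by
    intro p hp
    rw [hσ p]
    exact (Finset.mem_filter.mp hp).2.1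
  have hcardRA : RA.card = (GA lam i j).card := by
    apply Finset.card_image_of_injOn
    intro p hp p' hp' hpp
    apply σ.injective
    exact cell_ext hpp ((hcolA p hp).trans (hcolA p' hp').symm)
  have hcardRB : RB.card = (GBs lam i j).card := by
    apply Finset.card_image_of_injOn
    intro p hp p' hp' hpp
    apply σ.injective
    exact cell_ext hpp ((hcolB p hp).trans (hcolB p' hp').symm)
  have hsubRA : RA ⊆ RJ := by
    intro r hr
    obtain ⟨p, hp, hpr⟩ := Finset.mem_image.mp hr
    apply hmemRJ
    have hc := mem_cells.mp (σ p).2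
    rw [hcolA p hp, hpr] at hc
    exact hc
  have hsubRB : RB ⊆ RJ := by
    intro r hr
    obtain ⟨p, hp, hpr⟩ := Finset.mem_image.mp hr
    apply hmemRJ
    have hc := mem_cells.mp (σ p).2
    rw [hcolB p hp, hpr] at hc
    omega
  have hnd : ¬ Disjoint RA RB := by
    intro hdisj
    have hu := Finset.card_union_of_disjoint hdisj
    have hle : (RA ∪ RB).card ≤ RJ.card :=
      Finset.card_le_card (Finset.union_subset hsubRA hsubRB)
    omega
  obtain ⟨r, hrA, hrB⟩ := Finset.not_disjoint_iff.mp hnd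
  obtain ⟨pa, hpa, hpar⟩ := Finset.mem_image.mp hrA
  obtain ⟨pb, hpb, hpbr⟩ := Finset.mem_image.mp hrB
  refine ⟨σ pa, σ pb, ?_, ?_, ?_, ?_⟩
  · exact Finset.mem_image.mpr ⟨pa, Finset.mem_union_left _ hpa, rfl⟩
  · exact Finset.mem_image.mpr ⟨pb, Finset.mem_union_right _ hpb, rfl⟩
  · intro heq
    have hc1 := hcolA pa hpa
    have hc2 := hcolB pb hpb
    rw [heq] at hc1
    omega
  · rw [hpar, hpbr]

end Pleth
namespace Pleth

open Finset Equiv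

variable {lam : ℕ →₀ ℕ} {d : ℕ}

/-- weighted sum: entry value times column index -/
noncomputable def mcol (lam : ℕ →₀ ℕ) {d : ℕ} (t : Tab lam (Fin d)) : ℕ :=
  ∑ p : Cell lam, (t p).1 * (p : ℕ × ℕ).2

lemma mcol_permTab_of_colPres (t : Tab lam (Fin d)) {σ : Equiv.Perm (Cell lam)}
    (hσ : ColPres lam σ) : mcol lam (permTab lam t σ) = mcol lam t := by
  unfold mcol
  rw [← Equiv.sum_comp σ (fun p => (permTab lam t σ p).1 * (p : ℕ × ℕ).2)]
  apply Finset.sum_congr rfl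
  intro q _
  simp only [permTab, Equiv.Perm.inv_apply_self]
  rw [hσ q]

lemma colPres_of_suppIn_GAB {i j : ℕ} {g : Equiv.Perm (Cell lam)}
    (hg : g ∈ suppIn (GAB lam i j))
    (hmaps : ∀ p ∈ GBs lam i j, g p ∈ GBs lam i j) : ColPres lam g := by
  classical
  have himg : (GBs lam i j).image g = GBs lam i j := by
    apply Finset.eq_of_subset_of_card_le
    · intro x hx
      obtain ⟨p, hp, hpx⟩ := Finset.mem_image.mp hx
      rw [← hpx]; exact hmaps p hp
    · rw [Finset.card_image_of_injective _ g.injective]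
  intro p
  by_cases hp : p ∈ GAB lam i j
  · rcases Finset.mem_union.mp hp with hpa | hpb
    · -- p in column j
      have hgp : g p ∈ GAB lam i j := suppIn_maps hg hp
      have hgpb : g p ∉ GBs lam i j := by
        intro hmem
        rw [← himg] at hmem
        obtain ⟨p', hp', hpp'⟩ := Finset.mem_image.mp hmem
        have : p' = p := g.injective hpp'
        subst this
        have hc1 := (Finset.mem_filter.mp hpa).2.1
        have hc2 := (Finset.mem_filter.mp hp').2.1
        omega
      have hgpa : g p ∈ GA lam i j := by
        rcases Finset.mem_union.mp hgp with h | h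
        · exact h
        · exact absurd h hgpb
      have hc1 := (Finset.mem_filter.mp hpa).2.1
      have hc2 := (Finset.mem_filter.mp hgpa).2.1
      rw [hc1, hc2]
    · have hc1 := (Finset.mem_filter.mp hpb).2.1
      have hc2 := (Finset.mem_filter.mp (hmaps p hpb)).2.1
      rw [hc1, hc2]
  · rw [mem_suppIn.mp hg p hp]

lemma garnir_mcol_lt (t : Tab lam (Fin d)) {i j : ℕ}
    (h1 : ((i, j) : ℕ × ℕ) ∈ cells lam) (h2 : ((i, j + 1) : ℕ × ℕ) ∈ cells lam)
    (hcols : ColsStrict lam (· < ·) t)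
    (hdesc : t ⟨(i, j + 1), h2⟩ < t ⟨(i, j), h1⟩) {g : Equiv.Perm (Cell lam)}
    (hg : g ∈ suppIn (GAB lam i j)) (hnc : ¬ ColPres lam g) :
    mcol lam t < mcol lam (permTab lam t g) := by
  classical
  set v : ℕ := (t ⟨(i, j + 1), h2⟩).1 with hv
  -- value bounds
  have hGA_lb : ∀ a ∈ GA lam i j, v < (t a).1 := by
    intro a ha
    obtain ⟨_, hcol, hrow⟩ := Finset.mem_filter.mp ha
    by_cases hia : (a : ℕ × ℕ).1 = i
    · have : a = ⟨(i, j), h1⟩ := cell_ext hia hcol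
      rw [this]
      exact hdesc
    · have hlt : t ⟨(i, j), h1⟩ < t a := by
        apply hcols ⟨(i, j), h1⟩ a hcol.symm
        show i < (a : ℕ × ℕ).1
        omega
      have := hdesc.trans hlt
      exact this
  have hGB_ub : ∀ b ∈ GBs lam i j, (t b).1 ≤ v := by
    intro b hb
    obtain ⟨_, hcol, hrow⟩ := Finset.mem_filter.mp hb
    by_cases hib : (b : ℕ × ℕ).1 = i
    · have : b = ⟨(i, j + 1), h2⟩ := cell_ext hib hcol
      rw [this]
    · have hlt : t b < t ⟨(i, j + 1), h2⟩ := by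
        apply hcols b ⟨(i, j + 1), h2⟩ hcol
        show (b : ℕ × ℕ).1 < i
        omega
      exact le_of_lt hlt
  -- the set X = g⁻¹(GBs) inside GAB
  set X : Finset (Cell lam) := (GAB lam i j).filter (fun q => g q ∈ GBs lam i j) with hX
  have hXcard : X.card = (GBs lam i j).card := by
    refine Finset.card_bij (fun q _ => g q) ?_ ?_ ?_
    · intro q hq; exact (Finset.mem_filter.mp hq).2
    · intro q _ q' _ h; exact g.injective h
    · intro b hb
      refine ⟨g⁻¹ b, ?_, by simp⟩
      refine Finset.mem_filter.mpr ⟨?_, by simp [hb]⟩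
      exact suppIn_maps (inv_mem_suppIn hg) (Finset.mem_union_right _ hb)
  obtain ⟨q0, hq0B, hq0X⟩ : ∃ q0 ∈ GBs lam i j, g q0 ∉ GBs lam i j := by
    by_contra hcon
    push_neg at hcon
    exact hnc (colPres_of_suppIn_GAB hg hcon)
  have hq0notX : q0 ∉ X := by
    intro hmem
    exact hq0X (Finset.mem_filter.mp hmem).2
  have hXsub : X ⊆ GAB lam i j := Finset.filter_subset _ _
  have hGBsub : GBs lam i j ⊆ GAB lam i j := Finset.subset_union_right
  -- sum comparison
  have hsum_lt : ∑ q ∈ GBs lam i j, (t q).1 < ∑ q ∈ X, (t q).1 := by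
    have hd1 : (X ∩ GBs lam i j).card + (X \ GBs lam i j).card = X.card :=
      Finset.card_inter_add_card_sdiff _ _
    have hd2 : (GBs lam i j ∩ X).card + (GBs lam i j \ X).card = (GBs lam i j).card :=
      Finset.card_inter_add_card_sdiff _ _
    have hinter : (X ∩ GBs lam i j).card = (GBs lam i j ∩ X).card := by
      rw [Finset.inter_comm]
    have hk : (X \ GBs lam i j).card = (GBs lam i j \ X).card := by omega
    have hkpos : 1 ≤ (GBs lam i j \ X).card := by
      apply Finset.card_pos.mpr
      exact ⟨q0, Finset.mem_sdiff.mpr ⟨hq0B, hq0notX⟩⟩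
    have hXGA : X \ GBs lam i j ⊆ GA lam i j := by
      intro q hq
      obtain ⟨hqX, hqnB⟩ := Finset.mem_sdiff.mp hq
      rcases Finset.mem_union.mp (hXsub hqX) with h | h
      · exact h
      · exact absurd h hqnB
    have hub : ∑ q ∈ GBs lam i j \ X, (t q).1 ≤ (GBs lam i j \ X).card * v := by
      have := Finset.sum_le_card_nsmul (GBs lam i j \ X) (fun q => (t q).1) v
        (fun x hx => hGB_ub x (Finset.mem_sdiff.mp hx).1)
      simpa [smul_eq_mul] using this
    have hlb : (X \ GBs lam i j).card * (v + 1) ≤ ∑ q ∈ X \ GBs lam i j, (t q).1 := by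
      have := Finset.card_nsmul_le_sum (X \ GBs lam i j) (fun q => (t q).1) (v + 1)
        (fun x hx => hGA_lb x (hXGA hx))
      simpa [smul_eq_mul, mul_comm] using this
    have hs1 : ∑ q ∈ X, (t q).1
        = ∑ q ∈ X ∩ GBs lam i j, (t q).1 + ∑ q ∈ X \ GBs lam i j, (t q).1 :=
      (Finset.sum_inter_add_sum_sdiff _ _ _).symm
    have hs2 : ∑ q ∈ GBs lam i j, (t q).1
        = ∑ q ∈ GBs lam i j ∩ X, (t q).1 + ∑ q ∈ GBs lam i j \ X, (t q).1 :=
      (Finset.sum_inter_add_sum_sdiff _ _ _).symm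
    have hseq : ∑ q ∈ X ∩ GBs lam i j, (t q).1 = ∑ q ∈ GBs lam i j ∩ X, (t q).1 := by
      rw [Finset.inter_comm]
    have hmul : (X \ GBs lam i j).card * (v + 1)
        = (GBs lam i j \ X).card * v + (GBs lam i j \ X).card := by
      rw [hk]; ring
    omega
  -- the rearrangement identity
  have hre : mcol lam (permTab lam t g) + ∑ q ∈ GBs lam i j, (t q).1
      = mcol lam t + ∑ q ∈ X, (t q).1 := by
    have hstep : mcol lam (permTab lam t g)
        = ∑ q : Cell lam, (t q).1 * ((g q : Cell lam) : ℕ × ℕ).2 := by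
      unfold mcol
      rw [← Equiv.sum_comp g (fun p => (permTab lam t g p).1 * (p : ℕ × ℕ).2)]
      apply Finset.sum_congr rfl
      intro q _
      simp [permTab]
    rw [hstep]
    unfold mcol
    rw [← Finset.sum_add_sum_compl (GAB lam i j)
      (fun q => (t q).1 * ((g q : Cell lam) : ℕ × ℕ).2)]
    rw [← Finset.sum_add_sum_compl (GAB lam i j) (fun q => (t q).1 * (q : ℕ × ℕ).2)]
    have hcompl : ∑ q ∈ (GAB lam i j)ᶜ, (t q).1 * ((g q : Cell lam) : ℕ × ℕ).2
        = ∑ q ∈ (GAB lam i j)ᶜ, (t q).1 * (q : ℕ × ℕ).2 := by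
      apply Finset.sum_congr rfl
      intro q hq
      rw [mem_suppIn.mp hg q (Finset.mem_compl.mp hq)]
    have hcolq : ∀ q ∈ GAB lam i j, (q : ℕ × ℕ).2 = (if q ∈ GBs lam i j then j + 1 else j) := by
      intro q hq
      by_cases hmem : q ∈ GBs lam i j
      · rw [if_pos hmem]; exact (Finset.mem_filter.mp hmem).2.1
      · rw [if_neg hmem]
        rcases Finset.mem_union.mp hq with h | h
        · exact (Finset.mem_filter.mp h).2.1
        · exact absurd h hmem
    have hcolgq : ∀ q ∈ GAB lam i j,
        ((g q : Cell lam) : ℕ × ℕ).2 = (if q ∈ X then j + 1 else j) := by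
      intro q hq
      have hgq : g q ∈ GAB lam i j := suppIn_maps hg hq
      by_cases hmem : q ∈ X
      · rw [if_pos hmem]
        exact (Finset.mem_filter.mp ((Finset.mem_filter.mp hmem).2 : g q ∈ GBs lam i j)).2.1
      · rw [if_neg hmem]
        have hgqnB : g q ∉ GBs lam i j := by
          intro hc
          exact hmem (Finset.mem_filter.mpr ⟨hq, hc⟩)
        rcases Finset.mem_union.mp hgq with h | h
        · exact (Finset.mem_filter.mp h).2.1
        · exact absurd h hgqnB
    have hsplitA : ∑ q ∈ GAB lam i j, (t q).1 * ((g q : Cell lam) : ℕ × ℕ).2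
        = j * ∑ q ∈ GAB lam i j, (t q).1 + ∑ q ∈ X, (t q).1 := by
      rw [Finset.sum_congr rfl (fun q hq => by rw [hcolgq q hq])]
      have : ∀ q ∈ GAB lam i j, (t q).1 * (if q ∈ X then j + 1 else j)
          = j * (t q).1 + (if q ∈ X then (t q).1 else 0) := by
        intro q _
        by_cases hmem : q ∈ X
        · rw [if_pos hmem, if_pos hmem]; ring
        · rw [if_neg hmem, if_neg hmem]; ring
      rw [Finset.sum_congr rfl this, Finset.sum_add_distrib, ← Finset.mul_sum]
      congr 1
      rw [Finset.sum_ite_mem]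
      congr 1
      exact Finset.inter_eq_right.mpr hXsub
    have hsplitB : ∑ q ∈ GAB lam i j, (t q).1 * (q : ℕ × ℕ).2
        = j * ∑ q ∈ GAB lam i j, (t q).1 + ∑ q ∈ GBs lam i j, (t q).1 := by
      rw [Finset.sum_congr rfl (fun q hq => by rw [hcolq q hq])]
      have : ∀ q ∈ GAB lam i j, (t q).1 * (if q ∈ GBs lam i j then j + 1 else j)
          = j * (t q).1 + (if q ∈ GBs lam i j then (t q).1 else 0) := by
        intro q _
        by_cases hmem : q ∈ GBs lam i j
        · rw [if_pos hmem, if_pos hmem]; ring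
        · rw [if_neg hmem, if_neg hmem]; ring
      rw [Finset.sum_congr rfl this, Finset.sum_add_distrib, ← Finset.mul_sum]
      congr 1
      rw [Finset.sum_ite_mem]
      congr 1
      exact Finset.inter_eq_right.mpr hGBsub
    rw [hcompl, hsplitA, hsplitB]
    omega
  omega

end Pleth
namespace Pleth

open Finset Equiv

variable {lam : ℕ →₀ ℕ} {d : ℕ}

/-- number of column inversions -/
noncomputable def invc (lam : ℕ →₀ ℕ) {d : ℕ} (t : Tab lam (Fin d)) : ℕ :=
  (Finset.univ.filter (fun pq : Cell lam × Cell lam =>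
    ((pq.1 : ℕ × ℕ)).2 = ((pq.2 : ℕ × ℕ)).2 ∧ ((pq.1 : ℕ × ℕ)).1 < ((pq.2 : ℕ × ℕ)).1 ∧
      t pq.2 < t pq.1)).card

lemma invc_le (t : Tab lam (Fin d)) : invc lam t ≤ Fintype.card (Cell lam × Cell lam) := by
  unfold invc
  rw [← Finset.card_univ]
  exact Finset.card_filter_le _ _

lemma invc_swap_lt (t : Tab lam (Fin d)) {c c' : Cell lam}
    (hcol : (c : ℕ × ℕ).2 = (c' : ℕ × ℕ).2) (hrow : (c' : ℕ × ℕ).1 = (c : ℕ × ℕ).1 + 1)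
    (hdesc : t c' < t c) :
    invc lam (permTab lam t (Equiv.swap c c')) < invc lam t := by
  classical
  set θ := Equiv.swap c c' with hθdef
  have hne : c ≠ c' := by
    intro h
    rw [← h] at hrow
    omega
  have hθθ : ∀ x, θ (θ x) = x := fun x => Equiv.swap_apply_self _ _ _
  have hθcol : ∀ x : Cell lam, ((θ x : Cell lam) : ℕ × ℕ).2 = (x : ℕ × ℕ).2 :=
    colPres_swap hcol
  have htheta : ∀ p, permTab lam t θ p = t (θ p) := by
    intro p
    show t (θ⁻¹ p) = t (θ p)
    rw [hθdef, Equiv.swap_inv]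
  set S := Finset.univ.filter (fun pq : Cell lam × Cell lam =>
    ((pq.1 : ℕ × ℕ)).2 = ((pq.2 : ℕ × ℕ)).2 ∧ ((pq.1 : ℕ × ℕ)).1 < ((pq.2 : ℕ × ℕ)).1 ∧
      t pq.2 < t pq.1) with hSdef
  have hmemS : (c, c') ∈ S := by
    refine Finset.mem_filter.mpr ⟨Finset.mem_univ _, hcol,
      by show (c : ℕ × ℕ).1 < (c' : ℕ × ℕ).1; omega, hdesc⟩
  have hcard : invc lam (permTab lam t θ) ≤ (S.erase (c, c')).card := by
    apply Finset.card_le_card_of_injOn (fun pq => (θ pq.1, θ pq.2))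
    · -- maps to
      intro pq hpq
      obtain ⟨_, hcolpq, hrowpq, hvalpq⟩ := Finset.mem_filter.mp hpq
      rw [htheta, htheta] at hvalpq
      refine Finset.mem_erase.mpr ⟨?_, Finset.mem_filter.mpr
        ⟨Finset.mem_univ _, ?_, ?_, hvalpq⟩⟩
      · -- not the removed pair
        intro h
        have hp : θ pq.1 = c := congrArg Prod.fst h
        have hq : θ pq.2 = c' := congrArg Prod.snd h
        have hp2 : pq.1 = θ c := by rw [← hp, hθθ]
        have hq2 : pq.2 = θ c' := by rw [← hq, hθθ]
        rw [hθdef, Equiv.swap_apply_left] at hp2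
        rw [hθdef, Equiv.swap_apply_right] at hq2
        rw [hp2, hq2] at hrowpq
        omega
      · -- columns
        show ((θ pq.1 : Cell lam) : ℕ × ℕ).2 = ((θ pq.2 : Cell lam) : ℕ × ℕ).2
        rw [hθcol, hθcol]; exact hcolpq
      · -- rows
        show ((θ pq.1 : Cell lam) : ℕ × ℕ).1 < ((θ pq.2 : Cell lam) : ℕ × ℕ).1
        by_cases hpc : pq.1 = c
        · by_cases hqc' : pq.2 = c'
          · -- impossible: value condition contradicts hdesc
            exfalso
            rw [hpc, hqc'] at hvalpq
            rw [hθdef, Equiv.swap_apply_left, Equiv.swap_apply_right] at hvalpq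
            exact absurd hvalpq (lt_asymm hdesc)
          · have hqc : pq.2 ≠ c := by
              intro h
              rw [hpc, h] at hrowpq
              omega
            rw [hpc, hθdef, Equiv.swap_apply_left,
              Equiv.swap_apply_of_ne_of_ne hqc hqc']
            -- need row c' < row pq.2
            have hq_ge : (pq.2 : ℕ × ℕ).1 ≠ (c : ℕ × ℕ).1 + 1 := by
              intro h
              apply hqc'
              apply cell_ext (h.trans hrow.symm)
              rw [← hcol, ← hcolpq, hpc]
            have := hrowpq
            rw [hpc] at this
            omega
        · by_cases hpc' : pq.1 = c'
          · by_cases hqc : pq.2 = c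
            · exfalso
              rw [hpc', hqc] at hrowpq
              omega
            · have hqc' : pq.2 ≠ c' := by
                intro h
                rw [hpc', h] at hrowpq
                omega
              rw [hpc', hθdef, Equiv.swap_apply_right,
                Equiv.swap_apply_of_ne_of_ne hqc hqc']
              have := hrowpq
              rw [hpc'] at this
              omega
          · by_cases hqc : pq.2 = c
            · rw [hqc, hθdef, Equiv.swap_apply_left,
                Equiv.swap_apply_of_ne_of_ne hpc hpc']
              have := hrowpq
              rw [hqc] at this
              omega
            · by_cases hqc' : pq.2 = c'
              · rw [hqc', hθdef, Equiv.swap_apply_right,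
                  Equiv.swap_apply_of_ne_of_ne hpc hpc']
                have hp_ne : (pq.1 : ℕ × ℕ).1 ≠ (c : ℕ × ℕ).1 := by
                  intro h
                  apply hpc
                  apply cell_ext h
                  rw [hcolpq, hqc', ← hcol]
                have := hrowpq
                rw [hqc'] at this
                omega
              · rw [Equiv.swap_apply_of_ne_of_ne hpc hpc',
                  Equiv.swap_apply_of_ne_of_ne hqc hqc']
                exact hrowpq
    · -- injective
      intro a _ b _ hab
      have h1 : θ a.1 = θ b.1 := congrArg Prod.fst hab
      have h2 : θ a.2 = θ b.2 := congrArg Prod.snd hab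
      exact Prod.ext (θ.injective h1) (θ.injective h2)
  calc invc lam (permTab lam t θ) ≤ (S.erase (c, c')).card := hcard
  _ < S.card := Finset.card_erase_lt_of_mem hmemS

lemma col_interval (hlam : IsPartition lam) {r1 r2 jc : ℕ}
    (h : ((r2, jc) : ℕ × ℕ) ∈ cells lam) (hle : r1 ≤ r2) :
    ((r1, jc) : ℕ × ℕ) ∈ cells lam := by
  have h2 := mem_cells.mp h
  exact mem_cells.mpr (lt_of_lt_of_le h2 (hlam r1 r2 hle))

lemma row_interval {i j1 j2 : ℕ} (h : ((i, j2) : ℕ × ℕ) ∈ cells lam) (hle : j1 ≤ j2) :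
    ((i, j1) : ℕ × ℕ) ∈ cells lam := by
  have h2 : j2 < lam i := mem_cells.mp h
  exact mem_cells.mpr (show j1 < lam i by omega)

lemma exists_adjacent_col_descent (hlam : IsPartition lam) (t : Tab lam (Fin d))
    (hnoeq : ¬ ∃ p q : Cell lam, p ≠ q ∧ (p : ℕ × ℕ).2 = (q : ℕ × ℕ).2 ∧ t p = t q)
    (hncs : ¬ ColsStrict lam (· < ·) t) :
    ∃ (r jc : ℕ) (hc1 : ((r, jc) : ℕ × ℕ) ∈ cells lam)
      (hc2 : ((r + 1, jc) : ℕ × ℕ) ∈ cells lam),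
      t ⟨(r + 1, jc), hc2⟩ < t ⟨(r, jc), hc1⟩ := by
  have key : ∀ n : ℕ, ∀ (r1 r2 jc : ℕ) (hc1 : ((r1, jc) : ℕ × ℕ) ∈ cells lam)
      (hc2 : ((r2, jc) : ℕ × ℕ) ∈ cells lam), r1 < r2 → r2 - r1 ≤ n →
      t ⟨(r2, jc), hc2⟩ < t ⟨(r1, jc), hc1⟩ →
      ∃ (r jc : ℕ) (hc1 : ((r, jc) : ℕ × ℕ) ∈ cells lam)
        (hc2 : ((r + 1, jc) : ℕ × ℕ) ∈ cells lam),
        t ⟨(r + 1, jc), hc2⟩ < t ⟨(r, jc), hc1⟩ := by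
    intro n
    induction n with
    | zero => intro r1 r2 jc _ _ h1 h2 _; omega
    | succ n ih =>
      intro r1 r2 jc hc1 hc2 hlt hle hdesc
      by_cases hadj : r2 = r1 + 1
      · subst hadj
        exact ⟨r1, jc, hc1, hc2, hdesc⟩
      · have hmid : ((r1 + 1, jc) : ℕ × ℕ) ∈ cells lam :=
          col_interval hlam hc2 (by omega)
        rcases lt_trichotomy (t ⟨(r1 + 1, jc), hmid⟩) (t ⟨(r1, jc), hc1⟩) with h | h | h
        · exact ⟨r1, jc, hc1, hmid, h⟩
        · exfalso
          apply hnoeq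
          refine ⟨⟨(r1 + 1, jc), hmid⟩, ⟨(r1, jc), hc1⟩, ?_, rfl, h⟩
          intro hcells
          have := congrArg (fun x : Cell lam => (x : ℕ × ℕ).1) hcells
          simp at this
        · exact ih (r1 + 1) r2 jc hmid hc2 (by omega) (by omega) (hdesc.trans h)
  rw [ColsStrict] at hncs
  push_neg at hncs
  obtain ⟨p, q, hcol, hrow, hnlt⟩ := hncs
  have hne : p ≠ q := by
    intro h
    rw [h] at hrow
    omega
  have hdesc : t q < t p := by
    rcases lt_or_eq_of_le hnlt with h | h
    · exact h
    · exact absurd ⟨q, p, hne.symm, hcol.symm, h⟩ hnoeq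
  have hp : ((p : ℕ × ℕ).1, (p : ℕ × ℕ).2) ∈ cells lam := by
    rw [Prod.mk.eta]; exact p.2
  have hq : (((q : ℕ × ℕ).1, (p : ℕ × ℕ).2) : ℕ × ℕ) ∈ cells lam := by
    rw [hcol, Prod.mk.eta]; exact q.2
  have hpe : (⟨((p : ℕ × ℕ).1, (p : ℕ × ℕ).2), hp⟩ : Cell lam) = p := cell_ext rfl rfl
  have hqe : (⟨((q : ℕ × ℕ).1, (p : ℕ × ℕ).2), hq⟩ : Cell lam) = q := cell_ext rfl hcol
  refine key ((q : ℕ × ℕ).1 - (p : ℕ × ℕ).1) (p : ℕ × ℕ).1 (q : ℕ × ℕ).1 (p : ℕ × ℕ).2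
    hp hq hrow (le_refl _) ?_
  rw [hpe, hqe]
  exact hdesc

lemma exists_adjacent_row_descent (t : Tab lam (Fin d))
    (hnrw : ¬ RowsWeak lam (· ≤ ·) t) :
    ∃ (i j : ℕ) (hc1 : ((i, j) : ℕ × ℕ) ∈ cells lam)
      (hc2 : ((i, j + 1) : ℕ × ℕ) ∈ cells lam),
      t ⟨(i, j + 1), hc2⟩ < t ⟨(i, j), hc1⟩ := by
  have key : ∀ n : ℕ, ∀ (i j1 j2 : ℕ) (hc1 : ((i, j1) : ℕ × ℕ) ∈ cells lam)
      (hc2 : ((i, j2) : ℕ × ℕ) ∈ cells lam), j1 < j2 → j2 - j1 ≤ n →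
      t ⟨(i, j2), hc2⟩ < t ⟨(i, j1), hc1⟩ →
      ∃ (i j : ℕ) (hc1 : ((i, j) : ℕ × ℕ) ∈ cells lam)
        (hc2 : ((i, j + 1) : ℕ × ℕ) ∈ cells lam),
        t ⟨(i, j + 1), hc2⟩ < t ⟨(i, j), hc1⟩ := by
    intro n
    induction n with
    | zero => intro i j1 j2 _ _ h1 h2 _; omega
    | succ n ih =>
      intro i j1 j2 hc1 hc2 hlt hle hdesc
      by_cases hadj : j2 = j1 + 1
      · subst hadj
        exact ⟨i, j1, hc1, hc2, hdesc⟩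
      · have hmid : ((i, j1 + 1) : ℕ × ℕ) ∈ cells lam := row_interval hc2 (by omega)
        rcases le_or_gt (t ⟨(i, j1), hc1⟩) (t ⟨(i, j1 + 1), hmid⟩) with h | h
        · exact ih i (j1 + 1) j2 hmid hc2 (by omega) (by omega) (lt_of_lt_of_le hdesc h)
        · exact ⟨i, j1, hc1, hmid, h⟩
  rw [RowsWeak] at hnrw
  push_neg at hnrw
  obtain ⟨p, q, hrow, hcol, hdesc⟩ := hnrw
  have hcolne : (p : ℕ × ℕ).2 ≠ (q : ℕ × ℕ).2 := by
    intro h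
    rw [cell_ext hrow h] at hdesc
    exact lt_irrefl _ hdesc
  have hp : (((p : ℕ × ℕ).1, (p : ℕ × ℕ).2) : ℕ × ℕ) ∈ cells lam := by
    rw [Prod.mk.eta]; exact p.2
  have hq : (((p : ℕ × ℕ).1, (q : ℕ × ℕ).2) : ℕ × ℕ) ∈ cells lam := by
    rw [hrow, Prod.mk.eta]; exact q.2
  have hpe : (⟨((p : ℕ × ℕ).1, (p : ℕ × ℕ).2), hp⟩ : Cell lam) = p := cell_ext rfl rfl
  have hqe : (⟨((p : ℕ × ℕ).1, (q : ℕ × ℕ).2), hq⟩ : Cell lam) = q := cell_ext hrow rfl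
  refine key ((q : ℕ × ℕ).2 - (p : ℕ × ℕ).2) (p : ℕ × ℕ).1 (p : ℕ × ℕ).2 (q : ℕ × ℕ).2
    hp hq (by omega) (le_refl _) ?_
  rw [hpe, hqe]
  exact hdesc

end Pleth
namespace Pleth

open Finset Equiv

variable {lam : ℕ →₀ ℕ} {d : ℕ}

noncomputable def I0 (lam : ℕ →₀ ℕ) : ℕ := Fintype.card (Cell lam × Cell lam)

noncomputable def MB (lam : ℕ →₀ ℕ) (d : ℕ) : ℕ := ∑ p : Cell lam, d * (p : ℕ × ℕ).2

noncomputable def mu (lam : ℕ →₀ ℕ) {d : ℕ} (t : Tab lam (Fin d)) : ℕ :=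
  mcol lam t * (I0 lam + 1) + (I0 lam - invc lam t)

noncomputable def BND (lam : ℕ →₀ ℕ) (d : ℕ) : ℕ := MB lam d * (I0 lam + 1) + I0 lam

lemma mcol_le (t : Tab lam (Fin d)) : mcol lam t ≤ MB lam d :=
  Finset.sum_le_sum (fun p _ => Nat.mul_le_mul_right _ (le_of_lt (t p).2))

lemma mu_le (t : Tab lam (Fin d)) : mu lam t ≤ BND lam d := by
  unfold mu BND
  have h1 : mcol lam t * (I0 lam + 1) ≤ MB lam d * (I0 lam + 1) :=
    Nat.mul_le_mul_right _ (mcol_le t)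
  omega

lemma mu_lt_of_mcol_lt {t t' : Tab lam (Fin d)} (h : mcol lam t < mcol lam t') :
    mu lam t < mu lam t' := by
  unfold mu
  have h1 : (mcol lam t + 1) * (I0 lam + 1) ≤ mcol lam t' * (I0 lam + 1) :=
    Nat.mul_le_mul_right _ h
  have h2 : (mcol lam t + 1) * (I0 lam + 1) = mcol lam t * (I0 lam + 1) + (I0 lam + 1) := by
    ring
  have h3 := invc_le t
  omega

lemma mu_lt_of_invc_lt {t t' : Tab lam (Fin d)} (hm : mcol lam t' = mcol lam t)
    (hi : invc lam t' < invc lam t) : mu lam t < mu lam t' := by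
  unfold mu
  rw [hm]
  have h3 : invc lam t ≤ I0 lam := invc_le t
  omega

lemma straighten (hlam : IsPartition lam) (t : Tab lam (Fin d)) :
    polytabloid ℂ lam t ∈ Submodule.span ℂ
      {x : SymMod lam (Fin d) ℂ | ∃ u : Tab lam (Fin d),
        IsSemistd lam u ∧ ctB u = ctB t ∧ x = polytabloid ℂ lam u} := by
  classical
  suffices key : ∀ (k : ℕ) (t : Tab lam (Fin d)), BND lam d + 1 ≤ mu lam t + k →
      polytabloid ℂ lam t ∈ Submodule.span ℂ
        {x : SymMod lam (Fin d) ℂ | ∃ u : Tab lam (Fin d),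
          IsSemistd lam u ∧ ctB u = ctB t ∧ x = polytabloid ℂ lam u} by
    exact key (BND lam d + 1) t (by omega)
  intro k
  induction k with
  | zero =>
    intro t h
    have := mu_le t
    omega
  | succ k ih =>
    intro t hbnd
    by_cases hca : ∃ p q : Cell lam, p ≠ q ∧ (p : ℕ × ℕ).2 = (q : ℕ × ℕ).2 ∧ t p = t q
    · obtain ⟨p, q, hpq, hcol, hval⟩ := hca
      rw [polytabloid_eq_zero t hpq hcol hval]
      exact Submodule.zero_mem _
    by_cases hcs : ColsStrict lam (· < ·) t
    · by_cases hrw : RowsWeak lam (· ≤ ·) t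
      · exact Submodule.subset_span ⟨t, ⟨hrw, hcs⟩, rfl, rfl⟩
      · -- Garnir case
        obtain ⟨i, j, h1, h2, hdesc⟩ := exists_adjacent_row_descent t hrw
        have hgar := garnir_sum_zero (t := t) (AB := GAB lam i j)
          (garnir_pigeonhole hlam h1 h2)
        rw [← Finset.sum_filter_add_sum_filter_not (suppIn (GAB lam i j))
          (fun g => ColPres lam g)] at hgar
        set Gcp := (suppIn (GAB lam i j)).filter (fun g => ColPres lam g) with hGcp
        set Gnc := (suppIn (GAB lam i j)).filter (fun g => ¬ ColPres lam g) with hGnc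
        have hA : ∑ g ∈ Gcp, (Equiv.Perm.sign g : ℤ) • polytabloid ℂ lam (permTab lam t g)
            = Gcp.card • polytabloid ℂ lam t := by
          rw [Finset.sum_congr rfl (fun g hg => ?_), Finset.sum_const]
          rw [polytabloid_permTab ℂ t (Finset.mem_filter.mp hg).2, smul_smul, sign_sq,
            one_smul]
        rw [hA] at hgar
        have hone : (1 : Equiv.Perm (Cell lam)) ∈ Gcp :=
          Finset.mem_filter.mpr ⟨one_mem_suppIn, colPres_one⟩
        have hc0 : ((Gcp.card : ℕ) : ℂ) ≠ 0 := by
          have hpos : 0 < Gcp.card := Finset.card_pos.mpr ⟨1, hone⟩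
          exact Nat.cast_ne_zero.mpr hpos.ne'
        have hBmem : ∑ g ∈ Gnc, (Equiv.Perm.sign g : ℤ) • polytabloid ℂ lam (permTab lam t g)
            ∈ Submodule.span ℂ {x : SymMod lam (Fin d) ℂ | ∃ u : Tab lam (Fin d),
              IsSemistd lam u ∧ ctB u = ctB t ∧ x = polytabloid ℂ lam u} := by
          apply Submodule.sum_mem
          intro g hg
          obtain ⟨hgsupp, hgnc⟩ := Finset.mem_filter.mp hg
          have hmcol : mcol lam t < mcol lam (permTab lam t g) :=
            garnir_mcol_lt t h1 h2 hcs hdesc hgsupp hgnc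
          have hmu : mu lam t < mu lam (permTab lam t g) := mu_lt_of_mcol_lt hmcol
          have hct : ctB (permTab lam t g) = ctB t := funext (fun b => ctB_permTab t g b)
          have hrec := ih (permTab lam t g) (by omega)
          rw [hct] at hrec
          rw [← Int.cast_smul_eq_zsmul ℂ]
          exact Submodule.smul_mem _ _ hrec
        -- solve for polytabloid t
        have heq : ((Gcp.card : ℕ) : ℂ) • polytabloid ℂ lam t
            = -(∑ g ∈ Gnc, (Equiv.Perm.sign g : ℤ) • polytabloid ℂ lam (permTab lam t g)) := by
          rw [Nat.cast_smul_eq_nsmul]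
          exact eq_neg_of_add_eq_zero_left hgar
        have hFt : polytabloid ℂ lam t = ((Gcp.card : ℕ) : ℂ)⁻¹ •
            (-(∑ g ∈ Gnc, (Equiv.Perm.sign g : ℤ) • polytabloid ℂ lam (permTab lam t g))) := by
          rw [← heq, inv_smul_smul₀ hc0]
        rw [hFt]
        exact Submodule.smul_mem _ _ (Submodule.neg_mem _ hBmem)
    · -- column sort step
      obtain ⟨r, jc, h1, h2, hdesc⟩ := exists_adjacent_col_descent hlam t hca hcs
      set c1 : Cell lam := ⟨(r, jc), h1⟩ with hc1
      set c2 : Cell lam := ⟨(r + 1, jc), h2⟩ with hc2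
      have hne : c1 ≠ c2 := by
        intro h
        have := congrArg (fun x : Cell lam => (x : ℕ × ℕ).1) h
        simp [hc1, hc2] at this
      have hswapcp : ColPres lam (Equiv.swap c1 c2) := colPres_swap rfl
      have hFswap : polytabloid ℂ lam (permTab lam t (Equiv.swap c1 c2))
          = (Equiv.Perm.sign (Equiv.swap c1 c2) : ℤ) • polytabloid ℂ lam t :=
        polytabloid_permTab ℂ t hswapcp
      rw [Equiv.Perm.sign_swap hne] at hFswap
      have hFt : polytabloid ℂ lam t
          = -polytabloid ℂ lam (permTab lam t (Equiv.swap c1 c2)) := by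
        rw [hFswap]
        simp
      have hmcol : mcol lam (permTab lam t (Equiv.swap c1 c2)) = mcol lam t :=
        mcol_permTab_of_colPres t hswapcp
      have hinv : invc lam (permTab lam t (Equiv.swap c1 c2)) < invc lam t :=
        invc_swap_lt t rfl rfl hdesc
      have hmu : mu lam t < mu lam (permTab lam t (Equiv.swap c1 c2)) :=
        mu_lt_of_invc_lt hmcol hinv
      have hct : ctB (permTab lam t (Equiv.swap c1 c2)) = ctB t :=
        funext (fun b => ctB_permTab t _ b)
      have hrec := ih (permTab lam t (Equiv.swap c1 c2)) (by omega)
      rw [hct] at hrec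
      rw [hFt]
      exact Submodule.neg_mem _ hrec

end Pleth
namespace Pleth

open Finset Equiv

variable {lam : ℕ →₀ ℕ} {d : ℕ}

/-- row-weighted sum of entries -/
noncomputable def WtT (lam : ℕ →₀ ℕ) {d : ℕ} (t : Tab lam (Fin d)) : ℕ :=
  ∑ p : Cell lam, (p : ℕ × ℕ).1 * (t p).1

lemma WtT_permTab_lt (t : Tab lam (Fin d)) (hcs : ColsStrict lam (· < ·) t)
    {σ : Equiv.Perm (Cell lam)} (hσ : ColPres lam σ) (hσ1 : σ ≠ 1) :
    WtT lam (permTab lam t σ) < WtT lam t := by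
  classical
  suffices key : ∀ (n : ℕ) (σ : Equiv.Perm (Cell lam)), ColPres lam σ →
      (Finset.univ.filter (fun p => σ p ≠ p)).card ≤ n →
      WtT lam (permTab lam t σ) ≤ WtT lam t ∧
        (σ ≠ 1 → WtT lam (permTab lam t σ) < WtT lam t) by
    exact (key (Finset.univ.filter (fun p => σ p ≠ p)).card σ hσ (le_refl _)).2 hσ1
  intro n
  induction n with
  | zero =>
    intro σ hσ hcard
    have hempty : (Finset.univ.filter (fun p => σ p ≠ p)) = ∅ :=
      Finset.card_eq_zero.mp (by omega)
    have hσ1 : σ = 1 := by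
      apply Equiv.ext
      intro p
      by_contra hne
      have : p ∈ Finset.univ.filter (fun p => σ p ≠ p) :=
        Finset.mem_filter.mpr ⟨Finset.mem_univ _, hne⟩
      rw [hempty] at this
      exact absurd this (Finset.notMem_empty _)
    subst hσ1
    rw [permTab_one]
    exact ⟨le_refl _, fun h => absurd rfl h⟩
  | succ n ih =>
    intro σ hσ hcard
    by_cases hσ1 : σ = 1
    · subst hσ1
      rw [permTab_one]
      exact ⟨le_refl _, fun h => absurd rfl h⟩
    · -- pick moved point of maximal row
      have hne : (Finset.univ.filter (fun p => σ p ≠ p)).Nonempty := by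
        rw [Finset.filter_nonempty_iff]
        by_contra hcon
        push_neg at hcon
        apply hσ1
        apply Equiv.ext
        intro p
        exact hcon p (Finset.mem_univ p)
      obtain ⟨p0, hp0mem, hp0max⟩ :=
        Finset.exists_max_image _ (fun p : Cell lam => (p : ℕ × ℕ).1) hne
      have hp0 : σ p0 ≠ p0 := (Finset.mem_filter.mp hp0mem).2
      have hσp0_moved : σ (σ p0) ≠ σ p0 := fun h => hp0 (σ.injective h)
      have hσp0_mem : σ p0 ∈ Finset.univ.filter (fun p => σ p ≠ p) :=
        Finset.mem_filter.mpr ⟨Finset.mem_univ _, hσp0_moved⟩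
      have hrow1 : ((σ p0 : Cell lam) : ℕ × ℕ).1 < (p0 : ℕ × ℕ).1 := by
        have hle := hp0max _ hσp0_mem
        have hne2 : ((σ p0 : Cell lam) : ℕ × ℕ).1 ≠ (p0 : ℕ × ℕ).1 := by
          intro h
          exact hp0 (cell_ext h (hσ p0))
        omega
      have hinv_moved : σ (σ⁻¹ p0) ≠ σ⁻¹ p0 := by
        rw [Equiv.Perm.apply_inv_self]
        intro h
        apply hp0
        nth_rewrite 1 [h]
        rw [Equiv.Perm.apply_inv_self]
      have hinv_mem : σ⁻¹ p0 ∈ Finset.univ.filter (fun p => σ p ≠ p) :=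
        Finset.mem_filter.mpr ⟨Finset.mem_univ _, hinv_moved⟩
      have hrow2 : ((σ⁻¹ p0 : Cell lam) : ℕ × ℕ).1 < (p0 : ℕ × ℕ).1 := by
        have hle := hp0max _ hinv_mem
        have hne2 : ((σ⁻¹ p0 : Cell lam) : ℕ × ℕ).1 ≠ (p0 : ℕ × ℕ).1 := by
          intro h
          have h2 : σ⁻¹ p0 = p0 := cell_ext h (colPres_inv hσ p0)
          apply hp0
          nth_rewrite 1 [← h2]
          rw [Equiv.Perm.apply_inv_self]
        omega
      have hval : t (σ⁻¹ p0) < t p0 := hcs _ _ (colPres_inv hσ p0) hrow2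
      set θ := Equiv.swap p0 (σ p0) with hθdef
      have hθcp : ColPres lam θ := colPres_swap (hσ p0).symm
      set σ' := θ * σ with hσ'def
      have hσ'cp : ColPres lam σ' := colPres_mul hθcp hσ
      have hmoved' : (Finset.univ.filter (fun p => σ' p ≠ p)) ⊆
          (Finset.univ.filter (fun p => σ p ≠ p)).erase p0 := by
        intro x hx
        have hx2 : σ' x ≠ x := (Finset.mem_filter.mp hx).2
        refine Finset.mem_erase.mpr ⟨?_, ?_⟩
        · intro h
          subst h
          apply hx2
          show θ (σ x) = x
          rw [hθdef, Equiv.swap_apply_right]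
        · refine Finset.mem_filter.mpr ⟨Finset.mem_univ _, ?_⟩
          intro h
          apply hx2
          show θ (σ x) = x
          rw [h]
          apply Equiv.swap_apply_of_ne_of_ne
          · intro hh; rw [hh] at h; exact hp0 h
          · intro hh; rw [hh] at h; exact hσp0_moved h
      have hcard' : (Finset.univ.filter (fun p => σ' p ≠ p)).card ≤ n := by
        have h1 := Finset.card_le_card hmoved'
        have h2 := Finset.card_erase_lt_of_mem hp0mem
        omega
      have hih := ih σ' hσ'cp hcard'
      -- strict step: WtT (t σ) < WtT (t σ')
      have hstep : WtT lam (permTab lam t σ) < WtT lam (permTab lam t σ') := by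
        have hperm : permTab lam t σ' = permTab lam (permTab lam t σ) θ := by
          rw [permTab_permTab]
        rw [hperm]
        set u := permTab lam t σ with hudef
        have hup0 : u p0 = t (σ⁻¹ p0) := rfl
        have huσp0 : u (σ p0) = t p0 := by
          show t (σ⁻¹ (σ p0)) = t p0
          rw [Equiv.Perm.inv_apply_self]
        have huθp0 : permTab lam u θ p0 = t p0 := by
          show u (θ⁻¹ p0) = t p0
          rw [hθdef, Equiv.swap_inv, Equiv.swap_apply_left]
          exact huσp0
        have huθσp0 : permTab lam u θ (σ p0) = t (σ⁻¹ p0) := by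
          show u (θ⁻¹ (σ p0)) = t (σ⁻¹ p0)
          rw [hθdef, Equiv.swap_inv, Equiv.swap_apply_right]
          exact hup0
        have hother : ∀ x : Cell lam, x ≠ p0 → x ≠ σ p0 → permTab lam u θ x = u x := by
          intro x h1 h2
          show u (θ⁻¹ x) = u x
          rw [hθdef, Equiv.swap_inv, Equiv.swap_apply_of_ne_of_ne h1 h2]
        -- decompose both sums over pair {p0, σ p0} and complement
        have hpair_ne : p0 ≠ σ p0 := fun h => hp0 h.symm
        have hsplit : ∀ v : Tab lam (Fin d), WtT lam v
            = ((p0 : ℕ × ℕ).1 * (v p0).1 + ((σ p0 : Cell lam) : ℕ × ℕ).1 * (v (σ p0)).1)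
              + ∑ x ∈ ({p0, σ p0} : Finset (Cell lam))ᶜ, (x : ℕ × ℕ).1 * (v x).1 := by
          intro v
          rw [WtT, ← Finset.sum_add_sum_compl ({p0, σ p0} : Finset (Cell lam))]
          congr 1
          rw [Finset.sum_pair hpair_ne]
        rw [hsplit u, hsplit (permTab lam u θ)]
        have hcompl : ∑ x ∈ ({p0, σ p0} : Finset (Cell lam))ᶜ,
            (x : ℕ × ℕ).1 * (permTab lam u θ x).1
            = ∑ x ∈ ({p0, σ p0} : Finset (Cell lam))ᶜ, (x : ℕ × ℕ).1 * (u x).1 := by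
          apply Finset.sum_congr rfl
          intro x hx
          have hx2 := Finset.mem_compl.mp hx
          rw [Finset.mem_insert, Finset.mem_singleton] at hx2
          push_neg at hx2
          rw [hother x hx2.1 hx2.2]
        rw [hcompl, huθp0, huθσp0, hup0, huσp0]
        -- now pure arithmetic
        have hkey : ((p0 : ℕ × ℕ).1 * (t (σ⁻¹ p0)).1
              + ((σ p0 : Cell lam) : ℕ × ℕ).1 * (t p0).1)
            < ((p0 : ℕ × ℕ).1 * (t p0).1
              + ((σ p0 : Cell lam) : ℕ × ℕ).1 * (t (σ⁻¹ p0)).1) := by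
          have hb : ((σ p0 : Cell lam) : ℕ × ℕ).1 < (p0 : ℕ × ℕ).1 := hrow1
          have hx : (t (σ⁻¹ p0)).1 < (t p0).1 := hval
          set a := ((σ p0 : Cell lam) : ℕ × ℕ).1
          set b := (p0 : ℕ × ℕ).1
          set x := (t (σ⁻¹ p0)).1
          set y := (t p0).1
          have : (b : ℤ) * x + a * y < b * y + a * x := by nlinarith [hb, hx]
          exact_mod_cast this
        omega
      constructor
      · exact le_of_lt (lt_of_lt_of_le hstep hih.1)
      · intro _
        exact lt_of_lt_of_le hstep hih.1

end Pleth
namespace Pleth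

open Finset Equiv

variable {lam : ℕ →₀ ℕ} {d : ℕ}

noncomputable def WR (lam : ℕ →₀ ℕ) {d : ℕ} (r : RowData lam (Fin d)) : ℕ :=
  ∑ᶠ i : ℕ, i * ((r i).1.map Fin.val).sum

lemma WR_rowData (t : Tab lam (Fin d)) : WR lam (rowData lam t) = WtT lam t := by
  classical
  have hval : ∀ i : ℕ, ((rowData lam t i).1.map Fin.val).sum
      = ∑ j ∈ (Finset.range (lam i)).attach,
          (t ⟨(i, j.1), mem_cells.mpr (Finset.mem_range.mp j.2)⟩).1 := by
    intro i
    show ((((Finset.range (lam i)).attach.val).map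
      (fun j => t ⟨(i, j.1), mem_cells.mpr (Finset.mem_range.mp j.2)⟩)).map Fin.val).sum = _
    rw [Multiset.map_map]
    rfl
  have hs : Function.support (fun i => i * ((rowData lam t i).1.map Fin.val).sum)
      ⊆ ↑lam.support := by
    intro i hi
    simp only [Function.mem_support, ne_eq] at hi
    by_contra hmem
    apply hi
    have hz : lam i = 0 := by
      by_contra h0
      exact hmem (Finsupp.mem_support_iff.mpr h0)
    rw [hval i]
    have hempty : (Finset.range (lam i)).attach = ∅ :=
      Finset.card_eq_zero.mp (by rw [Finset.card_attach, Finset.card_range, hz])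
    rw [hempty, Finset.sum_empty, mul_zero]
  rw [WR, finsum_eq_sum_of_support_subset _ hs]
  rw [WtT, sum_cells_eq (fun p => (p : ℕ × ℕ).1 * (t p).1)]
  apply Finset.sum_congr rfl
  intro i _
  rw [hval i, Finset.mul_sum]

lemma dc_eq_range (S : Finset ℕ) (hdc : ∀ a b : ℕ, a ≤ b → b ∈ S → a ∈ S) :
    S = Finset.range S.card := by
  have hsub : S ⊆ Finset.range S.card := by
    intro x hx
    have hsub2 : Finset.range (x + 1) ⊆ S := by
      intro y hy
      exact hdc y x (by have := Finset.mem_range.mp hy; omega) hx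
    have := Finset.card_le_card hsub2
    rw [Finset.card_range] at this
    exact Finset.mem_range.mpr (by omega)
  exact Finset.eq_of_subset_of_card_le hsub (le_of_eq (Finset.card_range _))

lemma le_iff_lt_countP (t : Tab lam (Fin d)) (hrw : RowsWeak lam (· ≤ ·) t)
    (p : Cell lam) (v : Fin d) :
    t p ≤ v ↔ (p : ℕ × ℕ).2 <
      Multiset.countP (fun b => b ≤ v) (rowData lam t (p : ℕ × ℕ).1).1 := by
  classical
  set i := (p : ℕ × ℕ).1 with hi
  have hcount : Multiset.countP (fun b => b ≤ v) (rowData lam t i).1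
      = ((Finset.range (lam i)).attach.filter
          (fun j => t ⟨(i, j.1), mem_cells.mpr (Finset.mem_range.mp j.2)⟩ ≤ v)).card := by
    show Multiset.countP _ (((Finset.range (lam i)).attach.val).map
      (fun j => t ⟨(i, j.1), mem_cells.mpr (Finset.mem_range.mp j.2)⟩)) = _
    rw [Multiset.countP_eq_card_filter, Multiset.filter_map, Multiset.card_map,
      Finset.card, Finset.filter_val]
    congr 1
  set S := (Finset.range (lam i)).attach.filter
    (fun j => t ⟨(i, j.1), mem_cells.mpr (Finset.mem_range.mp j.2)⟩ ≤ v) with hS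
  set T := S.image Subtype.val with hT
  have hcardT : T.card = S.card := Finset.card_image_of_injective _ Subtype.val_injective
  have hdc : ∀ a b : ℕ, a ≤ b → b ∈ T → a ∈ T := by
    intro a b hab hb
    obtain ⟨j, hj, hjb⟩ := Finset.mem_image.mp hb
    obtain ⟨hj1, hj2⟩ := Finset.mem_filter.mp hj
    have hblt : b < lam i := by
      rw [← hjb]; exact Finset.mem_range.mp j.2
    have halt : a < lam i := by omega
    have hle : t ⟨(i, a), mem_cells.mpr halt⟩ ≤ t ⟨(i, j.1), mem_cells.mpr
        (Finset.mem_range.mp j.2)⟩ := by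
      apply hrw
      · rfl
      · show a ≤ j.1
        omega
    refine Finset.mem_image.mpr ⟨⟨a, Finset.mem_range.mpr halt⟩, ?_, rfl⟩
    exact Finset.mem_filter.mpr ⟨Finset.mem_attach _ _, le_trans hle hj2⟩
  have hTr : T = Finset.range T.card := dc_eq_range T hdc
  have hmemT : t p ≤ v ↔ (p : ℕ × ℕ).2 ∈ T := by
    constructor
    · intro hle
      have hplt : (p : ℕ × ℕ).2 < lam i := mem_cells.mp p.2
      refine Finset.mem_image.mpr ⟨⟨(p : ℕ × ℕ).2, Finset.mem_range.mpr hplt⟩, ?_, rfl⟩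
      refine Finset.mem_filter.mpr ⟨Finset.mem_attach _ _, ?_⟩
      have hcell : (⟨(i, (p : ℕ × ℕ).2), mem_cells.mpr hplt⟩ : Cell lam) = p :=
        cell_ext rfl rfl
      rw [hcell]
      exact hle
    · intro hmem
      obtain ⟨j, hj, hjp⟩ := Finset.mem_image.mp hmem
      obtain ⟨_, hj2⟩ := Finset.mem_filter.mp hj
      have hcell : (⟨(i, j.1), mem_cells.mpr (Finset.mem_range.mp j.2)⟩ : Cell lam) = p :=
        cell_ext rfl hjp
      rw [← hcell]
      exact hj2
  rw [hcount, hmemT, ← hcardT]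
  constructor
  · intro hmem
    rw [hTr] at hmem
    exact Finset.mem_range.mp hmem
  · intro hlt
    rw [hTr]
    exact Finset.mem_range.mpr hlt

lemma tab_eq_of_rowData_eq {t t' : Tab lam (Fin d)} (ht : RowsWeak lam (· ≤ ·) t)
    (ht' : RowsWeak lam (· ≤ ·) t') (h : rowData lam t = rowData lam t') : t = t' := by
  funext p
  apply le_antisymm
  · exact (le_iff_lt_countP t ht p (t' p)).mpr
      (by rw [h]; exact (le_iff_lt_countP t' ht' p (t' p)).mp (le_refl _))
  · exact (le_iff_lt_countP t' ht' p (t p)).mpr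
      (by rw [← h]; exact (le_iff_lt_countP t ht p (t p)).mp (le_refl _))

end Pleth
namespace Pleth

open Finset Equiv

variable {lam : ℕ →₀ ℕ} {d : ℕ}

lemma polytabloid_ssyt_li :
    LinearIndependent ℂ (fun u : {t : Tab lam (Fin d) // IsSemistd lam t} =>
      polytabloid ℂ lam u.1) := by
  classical
  rw [linearIndependent_iff]
  intro l hl
  by_contra hl0
  have hsupp : l.support.Nonempty := Finsupp.support_nonempty_iff.mpr hl0
  obtain ⟨u0, hu0, hmax⟩ := Finset.exists_max_image l.support
    (fun u => WtT lam u.1) hsupp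
  set r0 := rowData lam u0.1 with hr0
  have hcoeff : ∀ u : {t : Tab lam (Fin d) // IsSemistd lam t}, u ∈ l.support →
      (polytabloid ℂ lam u.1) r0 = if u = u0 then 1 else 0 := by
    intro u hu
    have hterm : ∀ σ : Equiv.Perm (Cell lam),
        (if ColPres lam σ then ((Equiv.Perm.sign σ : ℤ) •
            tabloid ℂ lam (permTab lam u.1 σ)) else 0) r0
          = if σ = 1 ∧ u = u0 then (1 : ℂ) else 0 := by
      intro σ
      by_cases hcp : ColPres lam σ
      · rw [if_pos hcp]
        show ((Equiv.Perm.sign σ : ℤ) •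
          Finsupp.single (rowData lam (permTab lam u.1 σ)) (1 : ℂ)) r0 = _
        rw [Finsupp.smul_apply, Finsupp.single_apply]
        by_cases hrd : rowData lam (permTab lam u.1 σ) = r0
        · have hW : WtT lam (permTab lam u.1 σ) = WtT lam u0.1 := by
            calc WtT lam (permTab lam u.1 σ)
                = WR lam (rowData lam (permTab lam u.1 σ)) := (WR_rowData _).symm
            _ = WR lam r0 := by rw [hrd]
            _ = WtT lam u0.1 := by rw [hr0, WR_rowData]
          have hσ1 : σ = 1 := by
            by_contra hs
            have hlt := WtT_permTab_lt u.1 u.2.2 hcp hs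
            have hle := hmax u hu
            omega
          subst hσ1
          rw [permTab_one] at hrd
          have huu0 : u = u0 := Subtype.ext (tab_eq_of_rowData_eq u.2.1 u0.2.1 hrd)
          rw [permTab_one, if_pos hrd, if_pos ⟨rfl, huu0⟩]
          simp
        · rw [if_neg hrd, smul_zero, if_neg]
          rintro ⟨h1, h2⟩
          apply hrd
          subst h1
          subst h2
          rw [permTab_one]
      · rw [if_neg hcp]
        show (0 : SymMod lam (Fin d) ℂ) r0 = _
        rw [Finsupp.zero_apply, if_neg]
        rintro ⟨h1, _⟩
        subst h1
        exact hcp colPres_one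
    have hF : (polytabloid ℂ lam u.1) r0
        = ∑ σ : Equiv.Perm (Cell lam), (if σ = 1 ∧ u = u0 then (1 : ℂ) else 0) := by
      rw [polytabloid, Finset.sum_apply']
      exact Finset.sum_congr rfl (fun σ _ => hterm σ)
    rw [hF]
    by_cases huu : u = u0
    · simp [huu]
    · simp [huu]
  have heval := congrArg (fun f : SymMod lam (Fin d) ℂ => f r0) hl
  rw [Finsupp.linearCombination_apply, Finsupp.sum] at heval
  simp only [Finsupp.zero_apply] at heval
  rw [Finset.sum_apply'] at heval
  have heval2 : ∑ u ∈ l.support, l u * ((polytabloid ℂ lam u.1) r0) = 0 := by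
    rw [← heval]
    exact Finset.sum_congr rfl (fun u _ => by rw [Finsupp.smul_apply, smul_eq_mul])
  rw [Finset.sum_congr rfl (fun u hu => by rw [hcoeff u hu])] at heval2
  simp only [mul_ite, mul_one, mul_zero] at heval2
  rw [Finset.sum_ite_eq' l.support u0 (fun u => l u)] at heval2
  rw [if_pos hu0] at heval2
  exact (Finsupp.mem_support_iff.mp hu0) heval2

end Pleth
namespace Pleth

open Finset Equiv

variable {lam : ℕ →₀ ℕ} {d : ℕ}

lemma diagActL_apply (z : Fin d → ℂ) (v : SymMod lam (Fin d) ℂ)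
    (r : RowData lam (Fin d)) :
    (diagActL lam d z v) r = (∏ b : Fin d, z b ^ rdCount lam r b) * v r := by
  classical
  rw [diagActL, Finsupp.lsum_apply, Finsupp.sum_apply, Finsupp.sum]
  simp only [LinearMap.smul_apply, Finsupp.lsingle_apply, Finsupp.smul_apply,
    Finsupp.single_apply, smul_eq_mul]
  rw [Finset.sum_congr rfl (fun r' _ => by rw [mul_ite, mul_zero])]
  rw [Finset.sum_ite_eq' v.support r
    (fun r' => (∏ b : Fin d, z b ^ rdCount lam r' b) * v r')]
  by_cases hmem : r ∈ v.support
  · rw [if_pos hmem]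
  · rw [if_neg hmem, Finsupp.notMem_support_iff.mp hmem, mul_zero]

/-- the eqLocus part of the weight space -/
noncomputable def eqL (lam : ℕ →₀ ℕ) (d : ℕ) (β : Fin d → ℕ) :
    Submodule ℂ (SymMod lam (Fin d) ℂ) :=
  ⨅ z : {z : Fin d → ℂ // ∀ i, z i ≠ 0},
    LinearMap.eqLocus (diagActL lam d z.1) ((∏ i : Fin d, z.1 i ^ β i) • LinearMap.id)

lemma weightSpace_def (β : Fin d → ℕ) :
    weightSpace lam d β = nabla ℂ lam (Fin d) ⊓ eqL lam d β := rfl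

lemma coord_zero_of_mem_eqL {β : Fin d → ℕ} {v : SymMod lam (Fin d) ℂ}
    (hv : v ∈ eqL lam d β) (r : RowData lam (Fin d))
    (hr : ¬ ∀ b : Fin d, rdCount lam r b = β b) : v r = 0 := by
  classical
  push_neg at hr
  obtain ⟨b0, hb0⟩ := hr
  set z : Fin d → ℂ := fun b => if b = b0 then 2 else 1 with hz
  have hz0 : ∀ i, z i ≠ 0 := by
    intro i
    by_cases h : i = b0 <;> simp [hz, h]
  have hvz := (Submodule.mem_iInf _).mp hv ⟨z, hz0⟩
  rw [LinearMap.mem_eqLocus] at hvz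
  have heval := congrArg (fun f : SymMod lam (Fin d) ℂ => f r) hvz
  simp only [LinearMap.smul_apply, LinearMap.id_apply, Finsupp.smul_apply,
    smul_eq_mul] at heval
  rw [diagActL_apply] at heval
  have hprod : ∀ (e : Fin d → ℕ), (∏ b : Fin d, z b ^ e b) = (2 : ℂ) ^ e b0 := by
    intro e
    rw [Finset.prod_eq_single b0]
    · simp [hz]
    · intro b _ hb
      simp [hz, hb]
    · intro h
      exact absurd (Finset.mem_univ b0) h
  rw [hprod, hprod] at heval
  have hne : ((2 : ℂ) ^ rdCount lam r b0) ≠ (2 : ℂ) ^ β b0 := by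
    intro h
    apply hb0
    have h2 : ((2 ^ rdCount lam r b0 : ℕ) : ℂ) = ((2 ^ β b0 : ℕ) : ℂ) := by
      push_cast
      exact h
    exact Nat.pow_right_injective (le_refl 2) (Nat.cast_injective h2)
  by_contra hvr
  apply hne
  have := mul_right_cancel₀ hvr heval
  exact this

lemma single_mem_eqL {β : Fin d → ℕ} (r : RowData lam (Fin d))
    (hr : ∀ b : Fin d, rdCount lam r b = β b) (a : ℂ) :
    Finsupp.single r a ∈ eqL lam d β := by
  apply (Submodule.mem_iInf _).mpr
  intro z
  rw [LinearMap.mem_eqLocus]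
  rw [diagActL, Finsupp.lsum_single]
  simp only [LinearMap.smul_apply, Finsupp.lsingle_apply, LinearMap.id_apply]
  congr 1
  exact Finset.prod_congr rfl (fun b _ => by rw [hr b])

lemma polytabloid_mem_eqL {β : Fin d → ℕ} (t : Tab lam (Fin d))
    (hct : ∀ b : Fin d, ctB t b = β b) :
    polytabloid ℂ lam t ∈ eqL lam d β := by
  rw [polytabloid]
  apply Submodule.sum_mem
  intro σ _
  by_cases hcp : ColPres lam σ
  · rw [if_pos hcp]
    rw [← Int.cast_smul_eq_zsmul ℂ]
    apply Submodule.smul_mem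
    apply single_mem_eqL
    intro b
    rw [rdCount_rowData, ctB_permTab]
    exact hct b
  · rw [if_neg hcp]
    exact Submodule.zero_mem _

/-- projection onto the β-weight coordinates -/
noncomputable def projW (lam : ℕ →₀ ℕ) (d : ℕ) (β : Fin d → ℕ) :
    SymMod lam (Fin d) ℂ →ₗ[ℂ] SymMod lam (Fin d) ℂ :=
  Finsupp.lsum ℂ (fun r => if (∀ b : Fin d, rdCount lam r b = β b)
    then Finsupp.lsingle r else 0)

lemma projW_apply (β : Fin d → ℕ) (v : SymMod lam (Fin d) ℂ) (r : RowData lam (Fin d)) :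
    (projW lam d β v) r = if (∀ b : Fin d, rdCount lam r b = β b) then v r else 0 := by
  classical
  rw [projW, Finsupp.lsum_apply, Finsupp.sum_apply, Finsupp.sum]
  have hterm : ∀ r' ∈ v.support,
      (((if (∀ b : Fin d, rdCount lam r' b = β b) then Finsupp.lsingle r'
        else (0 : ℂ →ₗ[ℂ] SymMod lam (Fin d) ℂ))) (v r')) r
      = if r' = r then (if (∀ b : Fin d, rdCount lam r b = β b) then v r' else 0) else 0 := by
    intro r' _
    by_cases hP : ∀ b : Fin d, rdCount lam r' b = β b
    · rw [if_pos hP, Finsupp.lsingle_apply, Finsupp.single_apply]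
      by_cases hrr : r' = r
      · subst hrr
        rw [if_pos rfl, if_pos rfl, if_pos hP]
      · rw [if_neg hrr, if_neg hrr]
    · rw [if_neg hP]
      simp only [LinearMap.zero_apply, Finsupp.zero_apply]
      by_cases hrr : r' = r
      · subst hrr
        rw [if_pos rfl, if_neg hP]
      · rw [if_neg hrr]
  rw [Finset.sum_congr rfl hterm]
  rw [Finset.sum_ite_eq' v.support r]
  by_cases hmem : r ∈ v.support
  · rw [if_pos hmem]
  · rw [if_neg hmem, Finsupp.notMem_support_iff.mp hmem]
    by_cases hP : ∀ b : Fin d, rdCount lam r b = β b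
    · rw [if_pos hP]
    · rw [if_neg hP]

lemma projW_eq_self_of_mem_eqL {β : Fin d → ℕ} {v : SymMod lam (Fin d) ℂ}
    (hv : v ∈ eqL lam d β) : projW lam d β v = v := by
  ext r
  rw [projW_apply]
  by_cases hP : ∀ b : Fin d, rdCount lam r b = β b
  · rw [if_pos hP]
  · rw [if_neg hP, coord_zero_of_mem_eqL hv r hP]

lemma projW_polytabloid (β : Fin d → ℕ) (t : Tab lam (Fin d)) :
    projW lam d β (polytabloid ℂ lam t)
      = if (∀ b : Fin d, ctB t b = β b) then polytabloid ℂ lam t else 0 := by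
  classical
  have hsingle : ∀ σ : Equiv.Perm (Cell lam),
      projW lam d β (Finsupp.single (rowData lam (permTab lam t σ)) (1 : ℂ))
        = if (∀ b : Fin d, ctB t b = β b)
            then Finsupp.single (rowData lam (permTab lam t σ)) (1 : ℂ) else 0 := by
    intro σ
    rw [projW, Finsupp.lsum_single]
    have hcond : (∀ b : Fin d, rdCount lam (rowData lam (permTab lam t σ)) b = β b)
        ↔ (∀ b : Fin d, ctB t b = β b) := by
      constructor
      · intro h b
        rw [← ctB_permTab t σ b, ← rdCount_rowData]
        exact h b
      · intro h b
        rw [rdCount_rowData, ctB_permTab]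
        exact h b
    by_cases hP : ∀ b : Fin d, ctB t b = β b
    · rw [if_pos (hcond.mpr hP), if_pos hP, Finsupp.lsingle_apply]
    · rw [if_neg (fun hc => hP (hcond.mp hc)), if_neg hP]
      rfl
  rw [polytabloid, map_sum]
  by_cases hP : ∀ b : Fin d, ctB t b = β b
  · rw [if_pos hP]
    apply Finset.sum_congr rfl
    intro σ _
    by_cases hcp : ColPres lam σ
    · rw [if_pos hcp, map_zsmul]
      show (Equiv.Perm.sign σ : ℤ) • projW lam d β
        (Finsupp.single (rowData lam (permTab lam t σ)) (1 : ℂ)) = _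
      rw [hsingle σ, if_pos hP]
      rfl
    · rw [if_neg hcp]
      exact map_zero _
  · rw [if_neg hP]
    apply Finset.sum_eq_zero
    intro σ _
    by_cases hcp : ColPres lam σ
    · rw [if_pos hcp, map_zsmul]
      show (Equiv.Perm.sign σ : ℤ) • projW lam d β
        (Finsupp.single (rowData lam (permTab lam t σ)) (1 : ℂ)) = _
      rw [hsingle σ, if_neg hP, smul_zero]
    · rw [if_neg hcp, map_zero]

theorem weightSpace_eq (hlam : IsPartition lam) (β : Fin d → ℕ) :
    weightSpace lam d β = Submodule.span ℂ (Set.range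
      (fun u : {t : Tab lam (Fin d) // IsSemistd lam t ∧ ctB t = β} =>
        polytabloid ℂ lam u.1)) := by
  apply le_antisymm
  · -- ≤
    intro v hv
    rw [weightSpace_def] at hv
    obtain ⟨hvN, hvE⟩ := hv
    have hfix : projW lam d β v = v := projW_eq_self_of_mem_eqL hvE
    rw [← hfix]
    have hmap : projW lam d β v ∈ Submodule.map (projW lam d β) (nabla ℂ lam (Fin d)) :=
      ⟨v, hvN, rfl⟩
    rw [nabla, Submodule.map_span] at hmap
    refine Submodule.span_le.mpr ?_ hmap
    rintro x ⟨y, ⟨t, rfl⟩, rfl⟩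
    show projW lam d β (polytabloid ℂ lam t) ∈ _
    rw [projW_polytabloid]
    by_cases hP : ∀ b : Fin d, ctB t b = β b
    · rw [if_pos hP]
      have hspan := straighten hlam t
      refine Submodule.span_le.mpr ?_ hspan
      rintro x ⟨u, hssyt, hctu, rfl⟩
      apply Submodule.subset_span
      exact ⟨⟨u, hssyt, by rw [hctu]; exact funext hP⟩, rfl⟩
    · rw [if_neg hP]
      exact Submodule.zero_mem _
  · -- ≥
    apply Submodule.span_le.mpr
    rintro x ⟨u, rfl⟩
    rw [weightSpace_def]
    refine ⟨?_, ?_⟩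
    · exact Submodule.subset_span ⟨u.1, rfl⟩
    · exact polytabloid_mem_eqL u.1 (fun b => by rw [u.2.2])

theorem finrank_weightSpace (hlam : IsPartition lam) (β : Fin d → ℕ) :
    Module.finrank ℂ (weightSpace lam d β)
      = Fintype.card {t : Tab lam (Fin d) // IsSemistd lam t ∧ ctB t = β} := by
  rw [weightSpace_eq hlam β]
  apply finrank_span_eq_card
  exact polytabloid_ssyt_li.comp
    (fun u : {t : Tab lam (Fin d) // IsSemistd lam t ∧ ctB t = β} => ⟨u.1, u.2.1⟩)
    (fun a b h => Subtype.ext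
      (congrArg (fun w : {t : Tab lam (Fin d) // IsSemistd lam t} => w.1) h))

end Pleth
namespace Pleth

open Finset

/-- **Lemma (character of `∇^lam`).**
Let `E = ℂ^d` with its standard basis, regarded as the natural representation of
`GL_d(ℂ)`, and let `lam` be a partition.  Then the formal character of the
`GL_d(ℂ)`-representation `∇^lam (E) ⊆ Sym^lam E` equals the Schur polynomial
`s_lam (x_0, …, x_{d-1})`. -/
theorem formalChar_eq_schurPoly (d : ℕ) (lam : ℕ →₀ ℕ) (hlam : IsPartition lam) :
    formalChar lam d = schurPoly lam d := by
  classical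
  set S : Finset (Fin d → ℕ) := Finset.image (fun t : Tab lam (Fin d) => ctB t)
    Finset.univ with hS
  set F : (Fin d → ℕ) → MvPolynomial (Fin d) ℂ := fun β =>
    (Module.finrank ℂ (weightSpace lam d β) : MvPolynomial (Fin d) ℂ) *
      ∏ i : Fin d, MvPolynomial.X i ^ β i with hF
  have hcard : ∀ β : Fin d → ℕ, (Module.finrank ℂ (weightSpace lam d β))
      = (Finset.univ.filter
          (fun t : Tab lam (Fin d) => IsSemistd lam t ∧ ctB t = β)).card := by
    intro β
    rw [finrank_weightSpace hlam β, Fintype.card_subtype]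
  have hsupp : Function.support F ⊆ ↑S := by
    intro β hβ
    simp only [Function.mem_support] at hβ
    by_contra hmem
    apply hβ
    have h0 : (Finset.univ.filter
        (fun t : Tab lam (Fin d) => IsSemistd lam t ∧ ctB t = β)).card = 0 := by
      rw [Finset.card_eq_zero]
      apply Finset.eq_empty_of_forall_notMem
      intro t ht
      obtain ⟨_, _, hct⟩ := Finset.mem_filter.mp ht
      exact hmem (Finset.mem_coe.mpr (Finset.mem_image.mpr ⟨t, Finset.mem_univ _, hct⟩))
    show ((Module.finrank ℂ (weightSpace lam d β)) : MvPolynomial (Fin d) ℂ) * _ = 0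
    rw [hcard β, h0]
    simp
  have hform : formalChar lam d = ∑ᶠ β : Fin d → ℕ, F β := rfl
  rw [hform, finsum_eq_sum_of_support_subset F hsupp]
  have hterm : ∀ β ∈ S, F β = ∑ t ∈ (Finset.univ.filter
      (fun t : Tab lam (Fin d) => IsSemistd lam t)).filter (fun t => ctB t = β),
        ∏ i : Fin d, MvPolynomial.X i ^ ctB t i := by
    intro β _
    show ((Module.finrank ℂ (weightSpace lam d β)) : MvPolynomial (Fin d) ℂ) * _ = _
    rw [hcard β]
    rw [Finset.sum_congr rfl (fun t ht => by
      rw [show ctB t = β from (Finset.mem_filter.mp ht).2])]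
    rw [Finset.sum_const, nsmul_eq_mul, Finset.filter_filter]
  rw [Finset.sum_congr rfl hterm]
  rw [Finset.sum_fiberwise_of_maps_to
    (fun t _ => Finset.mem_image.mpr ⟨t, Finset.mem_univ _, rfl⟩)
    (fun t => ∏ i : Fin d, MvPolynomial.X i ^ ctB t i)]
  rw [schurPoly, ← Finset.sum_filter]
  apply Finset.sum_congr rfl
  intro t _
  rw [← Finset.prod_fiberwise_of_maps_to (g := t) (fun p _ => Finset.mem_univ (t p))
    (fun p => MvPolynomial.X (t p))]
  apply Finset.prod_congr rfl
  intro b _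
  rw [Finset.prod_congr rfl (fun p hp => by
    rw [show t p = b from (Finset.mem_filter.mp hp).2])]
  rw [Finset.prod_const]
  congr 1
  unfold ctB
  apply congrArg Finset.card
  ext p
  simp

end Pleth
end

section
/- Let μ be a partition of m, ν a partition of n, λ a partition of mn, r ∈ ℕ and M ∈ ℕ. Set e = 1 if r ≥ ℓ(μ) and e = μ_{r+1} + 1 otherwise. If M > n(μ_1 + ⋯ + μ_{r−1}) + (n−1)μ_r + μ_{r+1} − (λ_1 + ⋯ + λ_r), then every semistandard ν-tableau U whose entries are semistandard (μ + M(1^r))-tableaux with entries from {1,…,d} and whose weight is λ + M(n^r) is r-saturated: every tableau entry u of U satisfies u(i,j) = i for all 1 ≤ i ≤ r and 1 ≤ j ≤ e. -/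
open scoped Classical

namespace Pleth

lemma rect_apply (r v i : ℕ) : rect r v i = if i < r then v else 0 := by
  classical
  rw [rect, Finsupp.finset_sum_apply]
  simp only [Finsupp.single_apply]
  rw [Finset.sum_ite_eq' (Finset.range r) i (fun _ => v)]
  simp [Finset.mem_range]

lemma kappa_apply (mu : ℕ →₀ ℕ) (r M i : ℕ) :
    (mu + rect r M) i = mu i + if i < r then M else 0 := by
  simp [rect_apply]

lemma kappa_partition {mu : ℕ →₀ ℕ} (hmu : IsPartition mu) (r M : ℕ) :
    IsPartition (mu + rect r M) := by
  intro i j hij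
  rw [kappa_apply, kappa_apply]
  have := hmu i j hij
  split_ifs <;> omega

lemma row_le_entry {kap : ℕ →₀ ℕ} (hk : IsPartition kap) {d : ℕ}
    (u : Tab kap (Fin d)) (hu : IsSemistd kap u) :
    ∀ (i j : ℕ) (hp : (i, j) ∈ cells kap), i ≤ (u ⟨(i, j), hp⟩ : ℕ) := by
  intro i
  induction i with
  | zero => intro j hp; exact Nat.zero_le _
  | succ i ih =>
    intro j hp
    have hcell : (i, j) ∈ cells kap := by
      rw [mem_cells] at *
      exact lt_of_lt_of_le hp (hk i (i + 1) (Nat.le_succ i))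
    have hlt := hu.2 ⟨(i, j), hcell⟩ ⟨(i + 1, j), hp⟩ rfl (Nat.lt_succ_self i)
    simp only [] at hlt
    rw [Fin.lt_def] at hlt
    have := ih j hcell
    omega

lemma cells_filter_row_lt (lam : ℕ →₀ ℕ) (r : ℕ) :
    ((cells lam).filter fun p => p.1 < r) =
      (Finset.range r).biUnion fun i => (Finset.range (lam i)).image fun j => (i, j) := by
  classical
  ext ⟨i, j⟩
  simp only [Finset.mem_filter, mem_cells, Finset.mem_biUnion, Finset.mem_image,
    Finset.mem_range, Prod.mk.injEq]
  constructor
  · rintro ⟨h1, h2⟩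
    exact ⟨i, h2, j, h1, rfl, rfl⟩
  · rintro ⟨a, ha, b, hb, rfl, rfl⟩
    exact ⟨hb, ha⟩

lemma card_cells_row_lt (lam : ℕ →₀ ℕ) (r : ℕ) :
    ((cells lam).filter fun p => p.1 < r).card = ∑ i ∈ Finset.range r, lam i := by
  classical
  rw [cells_filter_row_lt, Finset.card_biUnion]
  · refine Finset.sum_congr rfl fun i _ => ?_
    rw [Finset.card_image_of_injective, Finset.card_range]
    intro a b h
    exact (Prod.mk.injEq _ _ _ _ ▸ h : _ ∧ _).2
  · intro i _ i' _ hne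
    rw [Function.onFun, Finset.disjoint_left]
    rintro ⟨x, y⟩ hx hy
    simp only [Finset.mem_image, Finset.mem_range, Prod.mk.injEq] at hx hy
    obtain ⟨b, _, rfl, rfl⟩ := hx
    obtain ⟨b', _, h1, _⟩ := hy
    exact hne h1.symm

lemma card_cells (lam : ℕ →₀ ℕ) : (cells lam).card = lam.sum fun _ k => k := by
  classical
  set R := lam.support.sup id + 1 with hR
  have hfil : (cells lam).filter (fun p => p.1 < R) = cells lam := by
    apply Finset.filter_true_of_mem
    intro p hp
    have h2 := mem_cells.mp hp
    have h3 : p.1 ∈ lam.support := Finsupp.mem_support_iff.mpr (by omega)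
    have := Finset.le_sup (f := id) h3
    simp only [id] at this
    omega
  rw [← hfil, card_cells_row_lt, Finsupp.sum]
  refine (Finset.sum_subset ?_ ?_).symm
  · intro i hi
    have := Finset.le_sup (f := id) hi
    simp only [id] at this
    simp only [Finset.mem_range]
    omega
  · intro i _ hni
    exact Finsupp.notMem_support_iff.mp hni

lemma card_subtype_filter (s : Finset (ℕ × ℕ)) (q : ℕ × ℕ → Prop) [DecidablePred q] :
    (Finset.univ.filter fun p : {x // x ∈ s} => q p.1).card = (s.filter q).card := by
  classical
  rw [Finset.univ_eq_attach, Finset.filter_attach, Finset.card_map, Finset.card_attach]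

/-- **Lemma (saturation).**
Let `μ ⊢ m`, `ν ⊢ n`, `λ ⊢ mn`, `r ∈ ℕ` and `M ∈ ℕ`.  With `0`-indexed columns, the columns
`1 ≤ j ≤ e` of the paper (where `e = 1` if `r ≥ ℓ(μ)` and `e = μ_{r+1} + 1` otherwise)
are exactly the columns `j ≤ μ r` (`0`-indexed; note `μ r = 0` when `r ≥ ℓ(μ)`).
If `M > n(μ_1 + ⋯ + μ_{r-1}) + (n-1)μ_r + μ_{r+1} - (λ_1 + ⋯ + λ_r)`, then every
semistandard `ν`-tableau `U` whose entries are semistandard `(μ + M(1^r))`-tableaux with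
entries from `{0, …, d-1}` and whose weight is `λ + M(n^r)` is `r`-saturated:  every tableau
entry `u` of `U` satisfies `u (i, j) = i` for all rows `i < r` and columns `j ≤ μ r`. -/
theorem saturated_of_large (d m n r M : ℕ) (hm : 0 < m) (hn : 0 < n) (hr : 0 < r)
    (hM : 0 < M) (mu nu lam : ℕ →₀ ℕ)
    (hmu : IsPartitionOf mu m) (hnu : IsPartitionOf nu n) (hlam : IsPartitionOf lam (m * n))
    (hbound : (n : ℤ) * ∑ i ∈ Finset.range (r - 1), (mu i : ℤ)
        + (n - 1) * (mu (r - 1) : ℤ) + (mu r : ℤ)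
        - ∑ i ∈ Finset.range r, (lam i : ℤ) < (M : ℤ))
    (U : Tab nu (SSYT (mu + rect r M) (Fin d)))
    (hU : IsPSSYT (mu + rect r M) nu U)
    (hwt : HasWeight (mu + rect r M) nu U (fun b : Fin d => (lam + rect r (M * n)) b.1))
    (hwt' : ∀ i : ℕ, d ≤ i → (lam + rect r (M * n)) i = 0) :
    ∀ (P : Cell nu) (p : Cell (mu + rect r M)),
      p.1.1 < r → p.1.2 ≤ mu r → (((U P).1 p : Fin d) : ℕ) = p.1.1 := by
  classical
  have hκ : IsPartition (mu + rect r M) := kappa_partition hmu.1 r M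
  have hrd : r ≤ d := by
    by_contra hdr
    push_neg at hdr
    have h0 := hwt' d le_rfl
    rw [kappa_apply, if_pos (by omega)] at h0
    have := Nat.mul_pos hM hn
    omega
  have hd : 0 < d := by omega
  intro P p hprow hpcol
  by_contra hne
  obtain ⟨⟨i, j⟩, hpmem⟩ := p
  simp only at hprow hpcol hne ⊢
  -- per-entry-tableau counts
  set bad : Cell nu → ℕ := fun Q =>
    (Finset.univ.filter fun q : Cell (mu + rect r M) => q.1.1 < r ∧ ¬ ((U Q).1 q : ℕ) < r).card with hbaddef
  set good : Cell nu → ℕ := fun Q =>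
    (Finset.univ.filter fun q : Cell (mu + rect r M) => ((U Q).1 q : ℕ) < r).card with hgooddef
  -- rows-below-r count
  have hrows : ∀ Q : Cell nu, good Q + bad Q = ∑ i ∈ Finset.range r, mu i + r * M := by
    intro Q
    have hsplit := Finset.card_filter_add_card_filter_not
      (s := Finset.univ.filter fun q : Cell (mu + rect r M) => q.1.1 < r)
      (p := fun q : Cell (mu + rect r M) => ((U Q).1 q : ℕ) < r)
    rw [Finset.filter_filter, Finset.filter_filter] at hsplit
    have hge : ∀ q : Cell (mu + rect r M), q.1.1 ≤ ((U Q).1 q : ℕ) := by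
      intro q
      obtain ⟨⟨a, b⟩, hq⟩ := q
      exact row_le_entry hκ (U Q).1 (U Q).2 a b hq
    have hgoodeq : (Finset.univ.filter fun q : Cell (mu + rect r M) => q.1.1 < r ∧ ((U Q).1 q : ℕ) < r)
        = Finset.univ.filter fun q : Cell (mu + rect r M) => ((U Q).1 q : ℕ) < r := by
      apply Finset.filter_congr
      intro q _
      have := hge q
      constructor
      · exact fun h => h.2
      · exact fun h => ⟨by omega, h⟩
    rw [hgoodeq] at hsplit
    have hcard : (Finset.univ.filter fun q : Cell (mu + rect r M) => q.1.1 < r).card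
        = ∑ i ∈ Finset.range r, mu i + r * M := by
      rw [card_subtype_filter (cells (mu + rect r M)) (fun x => x.1 < r), card_cells_row_lt]
      rw [Finset.sum_congr rfl fun i hi =>
        (by rw [kappa_apply, if_pos (Finset.mem_range.mp hi)] : (mu + rect r M) i = mu i + M)]
      rw [Finset.sum_add_distrib, Finset.sum_const, Finset.card_range, smul_eq_mul]
    rw [← hcard, ← hsplit]
  -- total good count from the weight
  have hfib : ∀ Q : Cell nu, good Q =
      ∑ b ∈ Finset.univ.filter (fun b : Fin d => (b : ℕ) < r),
        (Finset.univ.filter fun q : Cell (mu + rect r M) => (U Q).1 q = b).card := by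
    intro Q
    simp only [hgooddef]
    rw [Finset.card_eq_sum_card_fiberwise (f := (U Q).1)
      (t := Finset.univ.filter (fun b : Fin d => (b : ℕ) < r))
      (fun x hx => by
        simp only [Finset.mem_coe, Finset.mem_filter, Finset.mem_univ, true_and] at hx ⊢
        exact hx)]
    refine Finset.sum_congr rfl fun b hb => ?_
    simp only [Finset.mem_filter, Finset.mem_univ, true_and] at hb
    congr 1
    rw [Finset.filter_filter]
    apply Finset.filter_congr
    intro q _
    constructor
    · exact fun h => h.2
    · exact fun h => ⟨h ▸ hb, h⟩
  have hgoodtot : ∑ Q : Cell nu, good Q = ∑ b ∈ Finset.range r, (lam b + M * n) := by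
    calc ∑ Q : Cell nu, good Q
        = ∑ b ∈ Finset.univ.filter (fun b : Fin d => (b : ℕ) < r),
            ∑ Q : Cell nu, (Finset.univ.filter fun q : Cell (mu + rect r M) => (U Q).1 q = b).card := by
          rw [Finset.sum_congr rfl fun Q _ => hfib Q]
          exact Finset.sum_comm
      _ = ∑ b ∈ Finset.univ.filter (fun b : Fin d => (b : ℕ) < r), (lam (b : ℕ) + M * n) := by
          refine Finset.sum_congr rfl fun b hb => ?_
          simp only [Finset.mem_filter, Finset.mem_univ, true_and] at hb
          have hw := hwt b
          simp only [kappa_apply] at hw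
          rw [if_pos hb] at hw
          refine Eq.trans ?_ hw.symm
          refine Finset.sum_congr rfl fun Q _ => ?_
          congr 1
      _ = ∑ b ∈ Finset.range r, (lam b + M * n) := by
          refine (Finset.sum_nbij' (fun b : ℕ => if h : b < d then (⟨b, h⟩ : Fin d)
              else ⟨0, hd⟩) (fun b : Fin d => (b : ℕ)) ?_ ?_ ?_ ?_ ?_).symm
          · intro a ha
            simp only [Finset.mem_range] at ha
            simp only [dif_pos (show a < d by omega)]
            simp only [Finset.mem_filter, Finset.mem_univ, true_and]
            exact ha
          · intro a ha
            simp only [Finset.mem_filter, Finset.mem_univ, true_and] at ha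
            simp only [Finset.mem_range]
            exact ha
          · intro a ha
            simp only [Finset.mem_range] at ha
            simp only [dif_pos (show a < d by omega)]
          · intro a ha
            simp only [Finset.mem_filter, Finset.mem_univ, true_and] at ha
            simp only [dif_pos (show (a : ℕ) < d by omega)]
          · intro a ha
            simp only [Finset.mem_range] at ha
            simp only [dif_pos (show a < d by omega)]
  -- total count over all cells of nu
  have htot : ∑ Q : Cell nu, good Q + ∑ Q : Cell nu, bad Q
      = n * (∑ i ∈ Finset.range r, mu i + r * M) := by
    rw [← Finset.sum_add_distrib, Finset.sum_congr rfl fun Q _ => hrows Q,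
      Finset.sum_const, smul_eq_mul, Finset.card_univ, Fintype.card_coe, card_cells, hnu.2]
  -- cells in column j below row r
  have hcellmem : ∀ i', i' < r → (i', j) ∈ cells (mu + rect r M) := by
    intro i' hi'
    rw [mem_cells]
    have h1 : mu r ≤ mu i' := hmu.1 i' r (le_of_lt hi')
    show j < (mu + rect r M) i'
    rw [kappa_apply, if_pos hi']
    omega
  -- propagation down column j
  have hprop : ∀ i', i ≤ i' → ∀ h : i' < r, i' + 1 ≤ ((U P).1 ⟨(i', j), hcellmem i' h⟩ : ℕ) := by
    intro i' hii'
    induction i', hii' using Nat.le_induction with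
    | base =>
      intro h
      have h0 := row_le_entry hκ (U P).1 (U P).2 i j (hcellmem i h)
      have e : (⟨(i, j), hcellmem i h⟩ : Cell (mu + rect r M)) = ⟨(i, j), hpmem⟩ := rfl
      rw [e] at h0 ⊢
      omega
    | succ i' hii' ih =>
      intro h
      have h1 := ih (by omega)
      have hlt := (U P).2.2 ⟨(i', j), hcellmem i' (by omega)⟩ ⟨(i' + 1, j), hcellmem _ h⟩
        rfl (Nat.lt_succ_self i')
      simp only [] at hlt
      rw [Fin.lt_def] at hlt
      have e : (⟨(i', j), hcellmem i' (by omega)⟩ : Cell (mu + rect r M)) = ⟨(i', j), hcellmem i' (by omega)⟩ :=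
        rfl
      omega
  -- entries in row r-1 to the right of column j are ≥ r
  have hrlt : r - 1 < r := by omega
  have hlastrow : ∀ j', j ≤ j' → ∀ h : (r - 1, j') ∈ cells (mu + rect r M),
      r ≤ ((U P).1 ⟨(r - 1, j'), h⟩ : ℕ) := by
    intro j' hjj' h
    have h1 := hprop (r - 1) (by omega) hrlt
    have h2 := (U P).2.1 ⟨(r - 1, j), hcellmem (r - 1) hrlt⟩ ⟨(r - 1, j'), h⟩ rfl hjj'
    simp only [] at h2
    rw [Fin.le_def] at h2
    omega
  -- lower bound on bad P
  have hbadP : mu (r - 1) + M ≤ bad P + j := by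
    have hsub : (Finset.Ico j ((mu + rect r M) (r - 1))).card ≤ bad P := by
      rw [hbaddef]
      apply Finset.card_le_card_of_injOn
        (fun j' => if h : (r - 1, j') ∈ cells (mu + rect r M) then (⟨(r - 1, j'), h⟩ : Cell (mu + rect r M))
          else ⟨(i, j), hpmem⟩)
      · intro j' hj'
        simp only [Finset.coe_Ico, Set.mem_Ico] at hj'
        have hmem : (r - 1, j') ∈ cells (mu + rect r M) := mem_cells.mpr hj'.2
        simp only [dif_pos hmem]
        simp only [Finset.mem_coe, Finset.mem_filter, Finset.mem_univ, true_and]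
        have := hlastrow j' hj'.1 hmem
        exact ⟨by omega, by omega⟩
      · intro a ha b hb hab
        simp only [Finset.coe_Ico, Set.mem_Ico] at ha hb
        have hma : (r - 1, a) ∈ cells (mu + rect r M) := mem_cells.mpr ha.2
        have hmb : (r - 1, b) ∈ cells (mu + rect r M) := mem_cells.mpr hb.2
        simp only [dif_pos hma, dif_pos hmb] at hab
        have := congrArg (fun x : Cell (mu + rect r M) => x.1.2) hab
        exact this
    rw [Nat.card_Ico] at hsub
    have hk1 : (mu + rect r M) (r - 1) = mu (r - 1) + M := by rw [kappa_apply, if_pos hrlt]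
    have hmr : mu r ≤ mu (r - 1) := hmu.1 (r - 1) r (by omega)
    omega
  have hbadle : bad P ≤ ∑ Q : Cell nu, bad Q :=
    Finset.single_le_sum (f := bad) (fun Q _ => Nat.zero_le _) (Finset.mem_univ P)
  -- final arithmetic contradiction in ℤ
  have hsplitmu : ((∑ i ∈ Finset.range r, mu i : ℕ) : ℤ)
      = ∑ i ∈ Finset.range (r - 1), (mu i : ℤ) + (mu (r - 1) : ℤ) := by
    push_cast
    conv_lhs => rw [show r = (r - 1) + 1 by omega, Finset.sum_range_succ]
  have hgoodZ : ((∑ Q : Cell nu, good Q : ℕ) : ℤ)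
      = ∑ i ∈ Finset.range r, (lam i : ℤ) + (r : ℤ) * (M * n) := by
    rw [hgoodtot, Finset.sum_add_distrib, Finset.sum_const, Finset.card_range, smul_eq_mul]
    push_cast
    ring
  have htotZ : ((∑ Q : Cell nu, good Q : ℕ) : ℤ) + ((∑ Q : Cell nu, bad Q : ℕ) : ℤ)
      = (n : ℤ) * (((∑ i ∈ Finset.range r, mu i : ℕ) : ℤ) + (r : ℤ) * M) := by
    exact_mod_cast htot
  rw [hsplitmu] at htotZ
  have hbadPZ : (mu (r - 1) : ℤ) + M ≤ (bad P : ℤ) + (mu r : ℤ) := by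
    have : (mu (r - 1) : ℤ) + M ≤ (bad P : ℤ) + (j : ℤ) := by exact_mod_cast hbadP
    have hj : (j : ℤ) ≤ (mu r : ℤ) := by exact_mod_cast hpcol
    linarith
  have hbadleZ : ((bad P : ℕ) : ℤ) ≤ ((∑ Q : Cell nu, bad Q : ℕ) : ℤ) := by
    exact_mod_cast hbadle
  nlinarith [htotZ, hgoodZ, hbadPZ, hbadleZ, hbound]

end Pleth
end
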